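/- arXiv:2206.03539 — 2 statements merged into one kernel-verified Lean document; each statement's English description precedes it below -/
import Mathlib

section
/- Let k ≥ 1 and let r ∈ [2kπ/(2k+1), π). Then V_{2k+1}(r) is not closed in VRm(S¹;r) and V_{2k−1}(r) is not open in VRm(S¹;r). Indeed, the measures μ_n = (1/n)·δ_{[0]} + Σ_{j=1}^{2k} (1/(2k) − 1/(2kn))·δ_{[2jπ/(2k+1)]} lie in V_{2k+1}(r) for every n ≥ 2, and they converge in VRm(S¹;r) to Σ_{j=1}^{2k} (1/(2k))·δ_{[2jπ/(2k+1)]}, which lies in V_{2k−1}(r). -/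
open MeasureTheory Metric Filter
open scoped unitInterval NNReal

noncomputable section

/-- The circle of circumference `2π`, modeled as `ℝ/2πℤ` with the quotient (geodesic) metric. -/
abbrev S1 : Type := AddCircle (2 * Real.pi)

instance : Fact (0 < 2 * Real.pi) := ⟨by positivity⟩

/-- The set of atoms of a probability measure. -/
def suppSet {X : Type*} [MeasurableSpace X] (μ : ProbabilityMeasure X) : Set X :=
  {x | μ {x} ≠ 0}

/-- Finitely supported Borel probability measures, topologized as a subspace of the
space of Borel probability measures with the topology of weak convergence. -/
abbrev Pfin (X : Type*) [MeasurableSpace X] : Type _ :=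
  {μ : ProbabilityMeasure X // ∃ S : Finset X, μ (↑S : Set X) = 1}

/-- The Vietoris–Rips metric thickening of the circle at scale `r`:
finitely supported probability measures whose support has diameter at most `r`. -/
def VRm (r : ℝ) : Set (Pfin S1) :=
  {μ | Metric.diam (suppSet μ.1) ≤ r}


/-- A closed arc of the circle: the image of a closed interval `[a,b]` (with
`a ≤ b < a + 2π`, so possibly a single point) under the projection `ℝ → ℝ/2πℤ`. -/
def IsClosedArc (A : Set S1) : Prop :=
  ∃ a b : ℝ, a ≤ b ∧ b < a + 2 * Real.pi ∧ A = (fun t : ℝ => (t : S1)) '' Set.Icc a b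

/-- A point `x` is excluded by `Θ` (at scale `r`) if its distance from some point
of `Θ` exceeds `r`. -/
def ExcludedBy (r : ℝ) (Θ : Set S1) (x : S1) : Prop :=
  ∃ θ ∈ Θ, r < dist θ x

/-- A `(Θ,r)`-arc: a closed arc, maximal among closed arcs that contain at least one
point of `Θ` and contain no point excluded by `Θ`. -/
def IsArc (r : ℝ) (Θ : Set S1) (A : Set S1) : Prop :=
  IsClosedArc A ∧ (A ∩ Θ).Nonempty ∧ (∀ x ∈ A, ¬ ExcludedBy r Θ x) ∧
    ∀ B : Set S1, IsClosedArc B → (B ∩ Θ).Nonempty → (∀ x ∈ B, ¬ ExcludedBy r Θ x) →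
      A ⊆ B → A = B

/-- `arcs_r(Θ)`: the number of `(Θ,r)`-arcs. -/
def arcsCount (r : ℝ) (Θ : Set S1) : ℕ :=
  Set.ncard {A : Set S1 | IsArc r Θ A}

/-- `arcs_r(μ)` for a finitely supported measure: the number of `(supp μ, r)`-arcs. -/
def arcsCountM (r : ℝ) (μ : Pfin S1) : ℕ :=
  arcsCount r (suppSet μ.1)

/-- `V_{2k+1}(r)`: measures in the metric thickening with exactly `2k+1` arcs. -/
def V (r : ℝ) (k : ℕ) : Set (Pfin S1) :=
  {μ ∈ VRm r | arcsCountM r μ = 2 * k + 1}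

/-- `W_{2k+1}(r)`: measures in the metric thickening with at most `2k+1` arcs. -/
def W (r : ℝ) (k : ℕ) : Set (Pfin S1) :=
  {μ ∈ VRm r | arcsCountM r μ ≤ 2 * k + 1}
namespace VRmAux

lemma dist_coe_le (x y : ℝ) : dist ((x:S1)) ((y:S1)) ≤ |x - y| := by
  rw [dist_eq_norm, ← QuotientAddGroup.mk_sub]
  simpa using (QuotientAddGroup.norm_mk_le_norm : ‖((x - y : ℝ) : S1)‖ ≤ ‖x - y‖)

lemma dist_coe_eq {x y : ℝ} (hxy : |x - y| ≤ Real.pi) : dist ((x:S1)) ((y:S1)) = |x - y| := by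
  rw [dist_eq_norm, ← QuotientAddGroup.mk_sub,
    AddCircle.norm_coe_eq_abs_iff _ (by positivity)]
  rw [abs_of_pos (by positivity : (0:ℝ) < 2 * Real.pi)]
  linarith

lemma coe_add_int_mul (x : ℝ) (m : ℤ) : ((x + m * (2*Real.pi) : ℝ) : S1) = (x : S1) := by
  have h0 : ((m * (2*Real.pi) : ℝ) : S1) = 0 := by
    rw [AddCircle.coe_eq_zero_iff]
    exact ⟨m, by rw [zsmul_eq_mul]⟩
  rw [show ((x + m * (2*Real.pi) : ℝ) : S1) = (x:S1) + ((m * (2*Real.pi) : ℝ) : S1) from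
    by rw [AddCircle.coe_add], h0, add_zero]

lemma coe_eq_coe_iff (x y : ℝ) : (x : S1) = (y : S1) ↔ ∃ m : ℤ, x = y + m * (2*Real.pi) := by
  constructor
  · intro hxy
    have : ((x - y : ℝ) : S1) = 0 := by
      rw [QuotientAddGroup.mk_sub, hxy, sub_self]
    rw [AddCircle.coe_eq_zero_iff] at this
    obtain ⟨m, hm⟩ := this
    exact ⟨m, by rw [zsmul_eq_mul] at hm; linarith⟩
  · rintro ⟨m, rfl⟩; exact coe_add_int_mul y m

/-- half the gap between consecutive points -/
def bet (k : ℕ) : ℝ := Real.pi / (2*k+1)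

/-- half the width of each arc -/
def hw (k : ℕ) (r : ℝ) : ℝ := r - 2*k*(bet k)

variable {k : ℕ} {r : ℝ}

lemma bet_pos : 0 < bet k := by
  have : (0:ℝ) < 2*k+1 := by positivity
  exact div_pos Real.pi_pos this

lemma pi_eq : (2*(k:ℝ)+1) * bet k = Real.pi := by
  have : (2*(k:ℝ)+1) ≠ 0 := by positivity
  unfold bet; field_simp

lemma hw_nonneg (hr1 : 2 * k * Real.pi / (2 * k + 1) ≤ r) : 0 ≤ hw k r := by
  have h : 2 * (k:ℝ) * Real.pi / (2 * k + 1) = 2*k*(bet k) := by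
    unfold bet; ring
  unfold hw; linarith [h ▸ hr1]

lemma hw_lt_bet (hrπ : r < Real.pi) : hw k r < bet k := by
  have := pi_eq (k := k)
  unfold hw; nlinarith

lemma r_eq : r = 2*k*(bet k) + hw k r := by unfold hw; ring

lemma bet_le_pi : bet k ≤ Real.pi := by
  rw [bet]
  rw [div_le_iff₀ (by positivity)]
  nlinarith [Real.pi_pos, Nat.cast_nonneg (α := ℝ) k]

/-- Core upper bound: points within `hw` of an arc-center shifted by at most `k` gaps are
within distance `r`. -/
lemma key_le (hr1 : 2 * k * Real.pi / (2 * k + 1) ≤ r) (hrπ : r < Real.pi)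
    (e : ℤ) (he : |e| ≤ k) (a u : ℝ) (hu : |u| ≤ hw k r) :
    dist ((a + 2*e*bet k : ℝ):S1) ((a + u : ℝ):S1) ≤ r := by
  refine (dist_coe_le _ _).trans ?_
  have h1 : |(e:ℝ)| ≤ k := by exact_mod_cast he
  have hb := bet_pos (k := k)
  have h2 : |2*e*bet k| ≤ 2*k*bet k := by
    rw [abs_mul, abs_of_pos hb, abs_mul, abs_two]
    nlinarith
  calc |a + 2*e*bet k - (a + u)| = |2*e*bet k - u| := by ring_nf
    _ ≤ |2*e*bet k| + |u| := abs_sub _ _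
    _ ≤ 2*k*bet k + hw k r := by linarith
    _ = r := (r_eq).symm

/-- Guard exclusion: a point near the antipode of `x` is at distance more than `r`. -/
lemma key_gt (hr0 : 0 ≤ r) (hrπ : r < Real.pi) {w : ℝ} (hw' : |w| < Real.pi - r) (x : ℝ) :
    r < dist ((x:ℝ):S1) ((x + Real.pi + w:ℝ):S1) := by
  have hπ := Real.pi_pos
  rw [abs_lt] at hw'
  rcases le_or_gt w 0 with hcase | hcase
  · rw [dist_coe_eq (by rw [abs_sub_comm]; rw [abs_le]; constructor <;> linarith)]
    rw [abs_sub_comm, abs_of_nonneg (by linarith)]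
    linarith
  · have : ((x + Real.pi + w : ℝ) : S1) = ((x + w - Real.pi : ℝ) : S1) := by
      rw [show (x + Real.pi + w : ℝ) = (x + w - Real.pi) + (1:ℤ) * (2*Real.pi) by push_cast; ring]
      exact coe_add_int_mul _ 1
    rw [this, dist_coe_eq (by rw [abs_le]; constructor <;> [linarith; linarith])]
    rw [abs_of_nonneg (by linarith)]
    linarith

end VRmAux

namespace VRmAux

/-- The `j`-th marked point on the circle. -/
def ptn (k : ℕ) (j : ℕ) : S1 := ((2*j*Real.pi/(2*k+1) : ℝ) : S1)

variable {k : ℕ} {r : ℝ}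

lemma ptn_eq (j : ℕ) : ptn k j = ((2*j*bet k : ℝ) : S1) := by
  unfold ptn bet; congr 1; ring

lemma r_nonneg (hr1 : 2 * k * Real.pi / (2 * k + 1) ≤ r) : 0 ≤ r :=
  le_trans (by positivity) hr1

/-- The candidate single-point arcs. -/
def arcC (k : ℕ) (r : ℝ) (j : ℕ) : Set S1 :=
  (fun t : ℝ => (t : S1)) '' Set.Icc (2*j*bet k - hw k r) (2*j*bet k + hw k r)

/-- The merged arc. -/
def arcM (k : ℕ) (r : ℝ) : Set S1 :=
  (fun t : ℝ => (t : S1)) '' Set.Icc (2*k*bet k - hw k r) (2*(k+1)*bet k + hw k r)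

/-- The full configuration of `2k+1` points. -/
def thetaFull (k : ℕ) : Set S1 := ptn k '' {j : ℕ | j ≤ 2*k}

/-- The configuration missing the point at `0`. -/
def thetaSlim (k : ℕ) : Set S1 := ptn k '' {j : ℕ | 1 ≤ j ∧ j ≤ 2*k}

/-- Key separation lemma: a closed arc without excluded points meeting `[t, t+γ]`
is contained in it, provided the flanking regions are excluded. -/
lemma arc_subset (hrπ : r < Real.pi) {Θ : Set S1} {t γ : ℝ}
    (exL : ∀ s, 0 < s → s < 2*(Real.pi - r) → ExcludedBy r Θ ((t - s : ℝ):S1))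
    (exR : ∀ s, 0 < s → s < 2*(Real.pi - r) → ExcludedBy r Θ ((t + γ + s : ℝ):S1))
    {A : Set S1} (hA : IsClosedArc A) (hAex : ∀ x ∈ A, ¬ ExcludedBy r Θ x)
    {p : ℝ} (hpA : ((p:ℝ):S1) ∈ A) (hp1 : t ≤ p) (hp2 : p ≤ t + γ) :
    A ⊆ (fun u:ℝ => (u:S1)) '' Set.Icc t (t + γ) := by
  set c := Real.pi - r with hc
  have hc0 : 0 < c := by simp only [hc]; linarith
  obtain ⟨a, b, hab, hba, rfl⟩ := hA
  intro x hx
  by_contra hxC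
  obtain ⟨q, hq, rfl⟩ := hx
  obtain ⟨p', hp', hpp⟩ := hpA
  rw [coe_eq_coe_iff] at hpp
  obtain ⟨m, hm⟩ := hpp
  set q₀ := q - m * (2*Real.pi) with hq₀def
  have hq₀ : ((q₀:ℝ) : S1) = ((q:ℝ):S1) := by
    rw [show q = q₀ + m * (2*Real.pi) by rw [hq₀def]; ring]
    exact (coe_add_int_mul _ _).symm
  have hnotin : ∀ v : ℝ, v ∈ Set.Icc t (t+γ) → ((v:ℝ):S1) ≠ ((q:ℝ):S1) := by
    intro v hv hv'
    exact hxC ⟨v, hv, hv'⟩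
  have hq₀notin : q₀ ∉ Set.Icc t (t+γ) := fun h => hnotin q₀ h hq₀
  have hq' : q = q₀ + m * (2*Real.pi) := by rw [hq₀def]; ring
  have hp'' : p' = p + m * (2*Real.pi) := hm
  -- membership helper
  have hmemA : ∀ u : ℝ, min p q₀ ≤ u → u ≤ max p q₀ →
      ((u:ℝ):S1) ∈ (fun t : ℝ => (t : S1)) '' Set.Icc a b := by
    intro u h1 h2
    refine ⟨u + m * (2*Real.pi), ⟨?_, ?_⟩, coe_add_int_mul u m⟩
    · rcases le_total p q₀ with h | h
      · have : min p q₀ = p := min_eq_left h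
        have := hp'.1; rw [hp''] at this; linarith [this, h1]
      · have : min p q₀ = q₀ := min_eq_right h
        have := hq.1; rw [hq'] at this; linarith [this, h1]
    · rcases le_total p q₀ with h | h
      · have : max p q₀ = q₀ := max_eq_right h
        have := hq.2; rw [hq'] at this; linarith [this, h2]
      · have : max p q₀ = p := max_eq_left h
        have := hp'.2; rw [hp''] at this; linarith [this, h2]
  rcases le_or_gt p q₀ with hpq | hpq
  · -- q₀ to the right of the arc
    have hq₀gt : t + γ < q₀ := by
      rcases lt_or_ge (t+γ) q₀ with h | h
      · exact h
      · exact absurd ⟨by linarith, h⟩ hq₀notin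
    set u := min q₀ (t + γ + c) with hu
    have hu1 : t + γ < u := lt_min hq₀gt (by linarith)
    have hu2 : u - (t + γ) < 2*c := by
      have : u ≤ t + γ + c := min_le_right _ _
      linarith
    have hexcl := exR (u - (t+γ)) (by linarith) (by linarith)
    rw [show t + γ + (u - (t+γ)) = u by ring] at hexcl
    refine hAex _ (hmemA u ?_ ?_) hexcl
    · exact le_trans (min_le_left _ _) (le_min hpq (by linarith))
    · exact le_trans (min_le_left _ _) (le_max_right _ _)
  · -- q₀ to the left of the arc
    have hq₀lt : q₀ < t := by
      rcases lt_or_ge q₀ t with h | h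
      · exact h
      · exact absurd ⟨h, by linarith⟩ hq₀notin
    set u := max q₀ (t - c) with hu
    have hu1 : u < t := max_lt hq₀lt (by linarith)
    have hu2 : t - u < 2*c := by
      have : t - c ≤ u := le_max_right _ _
      linarith
    have hexcl := exL (t - u) (by linarith) (by linarith)
    rw [show t - (t - u) = u by ring] at hexcl
    refine hAex _ (hmemA u ?_ ?_) hexcl
    · exact le_trans (min_le_right _ _) (le_max_left _ _)
    · exact le_trans (max_le (le_of_lt hpq) (by linarith)) (le_max_left _ _)

/-- A point on the far side of a guard point is excluded. -/
lemma excl_right {Θ : Set S1} (hr1 : 2 * k * Real.pi / (2 * k + 1) ≤ r) (hrπ : r < Real.pi)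
    (g : ℕ) (m : ℤ) (j : ℕ) (hguard : ptn k g ∈ Θ)
    (hgm : (j:ℤ) + k + 1 = g + m*(2*k+1)) (s y : ℝ)
    (hs1 : 0 < s) (hs2 : s < 2*(Real.pi - r)) (hy : y = 2*j*bet k + hw k r + s) :
    ExcludedBy r Θ ((y : ℝ) : S1) := by
  have hπeq := pi_eq (k := k)
  have hgm' : (j:ℝ) + k + 1 = g + m*(2*k+1) := by exact_mod_cast hgm
  have hco : ((y : ℝ) : S1) = ((2*g*bet k + Real.pi + (s - (Real.pi - r)) : ℝ) : S1) := by
    rw [coe_eq_coe_iff]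
    refine ⟨m - 1, ?_⟩
    rw [hy]
    unfold hw
    push_cast
    linear_combination (2*bet k) * hgm' + (2*((m:ℝ)-1)) * hπeq
  rw [hco]
  exact ⟨ptn k g, hguard, by
    rw [ptn_eq]
    exact key_gt (r_nonneg hr1) hrπ (abs_lt.mpr ⟨by linarith, by linarith⟩) _⟩

lemma excl_left {Θ : Set S1} (hr1 : 2 * k * Real.pi / (2 * k + 1) ≤ r) (hrπ : r < Real.pi)
    (g : ℕ) (m : ℤ) (j : ℕ) (hguard : ptn k g ∈ Θ)
    (hgm : (j:ℤ) + k = g + m*(2*k+1)) (s y : ℝ)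
    (hs1 : 0 < s) (hs2 : s < 2*(Real.pi - r)) (hy : y = 2*j*bet k - hw k r - s) :
    ExcludedBy r Θ ((y : ℝ) : S1) := by
  have hπeq := pi_eq (k := k)
  have hgm' : (j:ℝ) + k = g + m*(2*k+1) := by exact_mod_cast hgm
  have hco : ((y : ℝ) : S1) = ((2*g*bet k + Real.pi + ((Real.pi - r) - s) : ℝ) : S1) := by
    rw [coe_eq_coe_iff]
    refine ⟨m - 1, ?_⟩
    rw [hy]
    unfold hw
    push_cast
    linear_combination (2*bet k) * hgm' + (2*(m:ℝ)) * hπeq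
  rw [hco]
  exact ⟨ptn k g, hguard, by
    rw [ptn_eq]
    exact key_gt (r_nonneg hr1) hrπ (abs_lt.mpr ⟨by linarith, by linarith⟩) _⟩

/-- Existence of shift data between two indices in `[0, 2k]`. -/
lemma exists_em (i j : ℕ) (hi : i ≤ 2*k) (hj : j ≤ 2*k) :
    ∃ e m : ℤ, |e| ≤ k ∧ (i:ℤ) = j + e + m*(2*k+1) := by
  by_cases h1 : (i:ℤ) - j > k
  · exact ⟨(i:ℤ) - j - (2*k+1), 1, abs_le.mpr ⟨by omega, by omega⟩, by ring⟩
  · by_cases h2 : (i:ℤ) - j < -(k:ℤ)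
    · exact ⟨(i:ℤ) - j + (2*k+1), -1, abs_le.mpr ⟨by omega, by omega⟩, by ring⟩
    · exact ⟨(i:ℤ) - j, 0, abs_le.mpr ⟨by omega, by omega⟩, by ring⟩

/-- Distance from a marked point to any point near another marked point is at most `r`. -/
lemma dist_ptn_le (hr1 : 2 * k * Real.pi / (2 * k + 1) ≤ r) (hrπ : r < Real.pi)
    (i j : ℕ) (hi : i ≤ 2*k) (hj : j ≤ 2*k) (v : ℝ) (hv : |v - 2*j*bet k| ≤ hw k r) :
    dist (ptn k i) ((v : ℝ) : S1) ≤ r := by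
  obtain ⟨e, m, he, hm⟩ := exists_em i j hi hj
  have hπeq := pi_eq (k := k)
  have hm' : (i:ℝ) = j + e + m*(2*k+1) := by exact_mod_cast hm
  have hco : ptn k i = ((2*j*bet k + 2*e*bet k : ℝ) : S1) := by
    rw [ptn_eq, coe_eq_coe_iff]
    exact ⟨m, by linear_combination (2*bet k) * hm' + (2*(m:ℝ)) * hπeq⟩
  have hco2 : ((v : ℝ) : S1) = ((2*j*bet k + (v - 2*j*bet k) : ℝ) : S1) := by norm_num
  rw [hco, hco2]
  exact key_le hr1 hrπ e he _ _ hv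

/-- Distance bound for points of the merged arc. -/
lemma dist_ptn_le_merged (hr1 : 2 * k * Real.pi / (2 * k + 1) ≤ r) (hrπ : r < Real.pi)
    (i : ℕ) (h1 : 1 ≤ i) (h2 : i ≤ 2*k) (v : ℝ)
    (hv : |v - (2*(k:ℝ)+1)*bet k| ≤ bet k + hw k r) :
    dist (ptn k i) ((v : ℝ) : S1) ≤ r := by
  rw [ptn_eq]
  refine (dist_coe_le _ _).trans ?_
  have hb := bet_pos (k := k)
  have hd : |(2*(i:ℝ) - (2*k+1))| ≤ 2*k - 1 := by
    rw [abs_le]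
    have h1' : (1:ℝ) ≤ i := by exact_mod_cast h1
    have h2' : (i:ℝ) ≤ 2*k := by exact_mod_cast h2
    constructor <;> linarith
  have key : |2*(i:ℝ)*bet k - v| ≤ (2*k-1)*bet k + (bet k + hw k r) := by
    have : 2*(i:ℝ)*bet k - v = (2*(i:ℝ) - (2*k+1))*bet k - (v - (2*(k:ℝ)+1)*bet k) := by ring
    rw [this]
    refine (abs_sub _ _).trans ?_
    rw [abs_mul, abs_of_pos hb]
    have : |(2*(i:ℝ) - (2*k+1))| * bet k ≤ (2*k-1) * bet k := by nlinarith
    linarith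
  have : (2*(k:ℝ)-1)*bet k + (bet k + hw k r) = r := by unfold hw; ring
  linarith

lemma subset_arcC (hr1 : 2 * k * Real.pi / (2 * k + 1) ≤ r) (hrπ : r < Real.pi)
    {Θ : Set S1} (j gR gL : ℕ) (mR mL : ℤ)
    (hgR : ptn k gR ∈ Θ) (hgL : ptn k gL ∈ Θ)
    (hmR : (j:ℤ) + k + 1 = gR + mR*(2*k+1)) (hmL : (j:ℤ) + k = gL + mL*(2*k+1))
    {A : Set S1} (hA : IsClosedArc A) (hAex : ∀ x ∈ A, ¬ ExcludedBy r Θ x)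
    (hpA : ptn k j ∈ A) : A ⊆ arcC k r j := by
  have hh := hw_nonneg hr1 (k := k)
  have hsub := arc_subset (t := 2*j*bet k - hw k r) (γ := 2*hw k r) hrπ
    (fun s h1 h2 => excl_left hr1 hrπ gL mL j hgL hmL s _ h1 h2 (by ring))
    (fun s h1 h2 => excl_right hr1 hrπ gR mR j hgR hmR s _ h1 h2 (by ring))
    hA hAex (p := 2*j*bet k) (by rw [← ptn_eq]; exact hpA) (by linarith) (by linarith)
  unfold arcC
  rw [show 2*(j:ℝ)*bet k + hw k r = 2*(j:ℝ)*bet k - hw k r + 2*(hw k r) by ring]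
  exact hsub

lemma subset_arcM (hk : 1 ≤ k) (hr1 : 2 * k * Real.pi / (2 * k + 1) ≤ r) (hrπ : r < Real.pi)
    {A : Set S1} (hA : IsClosedArc A) (hAex : ∀ x ∈ A, ¬ ExcludedBy r (thetaSlim k) x)
    {j : ℕ} (hj : j = k ∨ j = k + 1) (hpA : ptn k j ∈ A) : A ⊆ arcM k r := by
  have hh := hw_nonneg hr1 (k := k)
  have hb := bet_pos (k := k)
  have h1Θ : ptn k 1 ∈ thetaSlim k := ⟨1, ⟨le_refl 1, by omega⟩, rfl⟩
  have h2Θ : ptn k (2*k) ∈ thetaSlim k := ⟨2*k, ⟨by omega, le_refl _⟩, rfl⟩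
  have hsub := arc_subset (t := 2*k*bet k - hw k r) (γ := 2*bet k + 2*hw k r) hrπ
    (fun s h1 h2 => excl_left hr1 hrπ (2*k) 0 k h2Θ (by push_cast; ring) s _ h1 h2 (by ring))
    (fun s h1 h2 => excl_right hr1 hrπ 1 1 (k+1) h1Θ (by push_cast; ring) s _ h1 h2
      (by push_cast; ring))
    hA hAex (p := 2*j*bet k) (by rw [← ptn_eq]; exact hpA) ?_ ?_
  · unfold arcM
    rw [show 2*((k:ℕ)+1:ℝ)*bet k + hw k r = 2*(k:ℝ)*bet k - hw k r + (2*bet k + 2*hw k r)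
      by push_cast; ring]
    exact hsub
  · rcases hj with rfl | rfl
    · linarith
    · push_cast; linarith
  · rcases hj with rfl | rfl
    · linarith
    · push_cast; linarith

/-- Guard data for the right side. -/
lemma guardR_ex (j : ℕ) (hj : j ≤ 2*k) :
    ∃ (g : ℕ) (m : ℤ), g ≤ 2*k ∧ (j:ℤ) + k + 1 = g + m*(2*k+1) ∧ (j ≠ k → 1 ≤ g) := by
  by_cases h : j + k + 1 ≤ 2*k
  · exact ⟨j+k+1, 0, h, by push_cast; ring, fun _ => by omega⟩
  · exact ⟨j - k, 1, by omega, by omega, fun h' => by omega⟩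

/-- Guard data for the left side. -/
lemma guardL_ex (j : ℕ) (hj : j ≤ 2*k) :
    ∃ (g : ℕ) (m : ℤ), g ≤ 2*k ∧ (j:ℤ) + k = g + m*(2*k+1) ∧ (j ≠ k+1 → 1 ≤ j → 1 ≤ g) := by
  by_cases h : j + k ≤ 2*k
  · exact ⟨j+k, 0, h, by push_cast; ring, fun _ h1 => by omega⟩
  · exact ⟨j - k - 1, 1, by omega, by omega, fun h' _ => by omega⟩

lemma nex_full (hr1 : 2 * k * Real.pi / (2 * k + 1) ≤ r) (hrπ : r < Real.pi)
    {j : ℕ} (hj : j ≤ 2*k) : ∀ x ∈ arcC k r j, ¬ ExcludedBy r (thetaFull k) x := by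
  rintro x ⟨v, hv, rfl⟩ ⟨θ', ⟨i, hi, rfl⟩, hd⟩
  exact absurd hd (not_lt.mpr (dist_ptn_le hr1 hrπ i j hi hj v
    (abs_le.mpr ⟨by linarith [hv.1], by linarith [hv.2]⟩)))

lemma nex_slim (hr1 : 2 * k * Real.pi / (2 * k + 1) ≤ r) (hrπ : r < Real.pi)
    {j : ℕ} (hj : j ≤ 2*k) : ∀ x ∈ arcC k r j, ¬ ExcludedBy r (thetaSlim k) x := by
  rintro x ⟨v, hv, rfl⟩ ⟨θ', ⟨i, ⟨hi1, hi2⟩, rfl⟩, hd⟩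
  exact absurd hd (not_lt.mpr (dist_ptn_le hr1 hrπ i j hi2 hj v
    (abs_le.mpr ⟨by linarith [hv.1], by linarith [hv.2]⟩)))

lemma nex_arcM (hr1 : 2 * k * Real.pi / (2 * k + 1) ≤ r) (hrπ : r < Real.pi) :
    ∀ x ∈ arcM k r, ¬ ExcludedBy r (thetaSlim k) x := by
  rintro x ⟨v, hv, rfl⟩ ⟨θ', ⟨i, ⟨hi1, hi2⟩, rfl⟩, hd⟩
  have hb := bet_pos (k := k)
  refine absurd hd (not_lt.mpr (dist_ptn_le_merged hr1 hrπ i hi1 hi2 v (abs_le.mpr ⟨?_, ?_⟩)))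
  · have := hv.1; push_cast at this ⊢; linarith
  · have := hv.2; push_cast at this ⊢; linarith

lemma ptn_mem_arcC (hr1 : 2 * k * Real.pi / (2 * k + 1) ≤ r) (j : ℕ) :
    ptn k j ∈ arcC k r j := by
  have hh := hw_nonneg hr1 (k := k)
  exact ⟨2*j*bet k, ⟨by linarith, by linarith⟩, (ptn_eq j).symm⟩

lemma ptn_mem_arcM (hr1 : 2 * k * Real.pi / (2 * k + 1) ≤ r) {j : ℕ} (hj : j = k ∨ j = k+1) :
    ptn k j ∈ arcM k r := by
  have hh := hw_nonneg hr1 (k := k)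
  have hb := bet_pos (k := k)
  refine ⟨2*j*bet k, ⟨?_, ?_⟩, (ptn_eq j).symm⟩ <;>
    (rcases hj with rfl | rfl <;> push_cast <;> linarith)

lemma bet_lt_pi (hk : 1 ≤ k) : 2 * bet k < Real.pi := by
  have hπ := Real.pi_pos
  have h1 : (1:ℝ) ≤ k := by exact_mod_cast hk
  rw [bet, show 2 * (Real.pi / (2*(k:ℝ)+1)) = 2*Real.pi/(2*(k:ℝ)+1) by ring,
    div_lt_iff₀ (by positivity)]
  nlinarith

lemma isArc_arcC_of (hr1 : 2 * k * Real.pi / (2 * k + 1) ≤ r) (hrπ : r < Real.pi)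
    {Θ : Set S1} (j gR gL : ℕ) (mR mL : ℤ) (hjΘ : ptn k j ∈ Θ)
    (hgR : ptn k gR ∈ Θ) (hgL : ptn k gL ∈ Θ)
    (hmR : (j:ℤ) + k + 1 = gR + mR*(2*k+1)) (hmL : (j:ℤ) + k = gL + mL*(2*k+1))
    (hnex : ∀ x ∈ arcC k r j, ¬ ExcludedBy r Θ x) : IsArc r Θ (arcC k r j) := by
  have hh := hw_nonneg hr1 (k := k)
  have hb := bet_pos (k := k)
  have hβπ := bet_le_pi (k := k)
  have hhb := hw_lt_bet hrπ (k := k)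
  have hπ := Real.pi_pos
  refine ⟨⟨_, _, by linarith, by linarith, rfl⟩, ⟨ptn k j, ptn_mem_arcC hr1 j, hjΘ⟩, hnex, ?_⟩
  intro B hB hBne hBex hsubAB
  exact Set.Subset.antisymm hsubAB
    (subset_arcC hr1 hrπ j gR gL mR mL hgR hgL hmR hmL hB hBex (hsubAB (ptn_mem_arcC hr1 j)))

lemma isArc_arcM (hk : 1 ≤ k) (hr1 : 2 * k * Real.pi / (2 * k + 1) ≤ r) (hrπ : r < Real.pi) :
    IsArc r (thetaSlim k) (arcM k r) := by
  have hh := hw_nonneg hr1 (k := k)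
  have hb := bet_pos (k := k)
  have hhb := hw_lt_bet hrπ (k := k)
  have hβπ := bet_lt_pi hk
  have hπ := Real.pi_pos
  have hkΘ : ptn k k ∈ thetaSlim k := ⟨k, ⟨hk, by omega⟩, rfl⟩
  refine ⟨⟨_, _, by push_cast; linarith, by push_cast; linarith,
    rfl⟩, ⟨ptn k k, ptn_mem_arcM hr1 (Or.inl rfl), hkΘ⟩, nex_arcM hr1 hrπ, ?_⟩
  intro B hB hBne hBex hsubAB
  exact Set.Subset.antisymm hsubAB
    (subset_arcM hk hr1 hrπ hB hBex (Or.inl rfl) (hsubAB (ptn_mem_arcM hr1 (Or.inl rfl))))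

lemma eq_of_ptn_mem (hr1 : 2 * k * Real.pi / (2 * k + 1) ≤ r) (hrπ : r < Real.pi)
    {i j : ℕ} (hi : i ≤ 2*k) (hj : j ≤ 2*k) (hmem : ptn k i ∈ arcC k r j) : i = j := by
  obtain ⟨v, hv, hvi⟩ := hmem
  rw [ptn_eq, coe_eq_coe_iff] at hvi
  obtain ⟨m, hm⟩ := hvi
  have hb := bet_pos (k := k)
  have hπeq := pi_eq (k := k)
  have hhb := hw_lt_bet hrπ (k := k)
  have hh := hw_nonneg hr1 (k := k)
  set d : ℤ := (i:ℤ) - j + m*(2*k+1) with hd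
  have hrw : v - 2*j*bet k = 2*(d:ℝ)*bet k := by
    rw [hm]; push_cast [hd]
    linear_combination (-2*(m:ℝ)) * hπeq
  have habs : |2*(d:ℝ)*bet k| < 2*bet k := by
    rw [← hrw]
    have : |v - 2*j*bet k| ≤ hw k r := abs_le.mpr ⟨by linarith [hv.1], by linarith [hv.2]⟩
    linarith [abs_nonneg (v - 2*j*bet k)]
  have hd0 : d = 0 := by
    by_contra h0
    have h1 : (1:ℝ) ≤ |(d:ℝ)| := by
      have : (1:ℤ) ≤ |d| := Int.one_le_abs h0
      calc (1:ℝ) ≤ ((|d| : ℤ) : ℝ) := by exact_mod_cast this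
        _ = |(d:ℝ)| := by push_cast; rfl
    rw [abs_mul, abs_mul, abs_two, abs_of_pos hb] at habs
    nlinarith
  have hd0' : (i:ℤ) - j + m*(2*k+1) = 0 := by rw [← hd]; exact hd0
  have hi' : (i:ℤ) ≤ 2*k := by exact_mod_cast hi
  have hj' : (j:ℤ) ≤ 2*k := by exact_mod_cast hj
  have hi0 : (0:ℤ) ≤ i := Int.natCast_nonneg i
  have hj0 : (0:ℤ) ≤ j := Int.natCast_nonneg j
  have : (i:ℤ) = j := by
    rcases lt_trichotomy m 0 with hm0 | rfl | hm0
    · have h1 : m*(2*k+1) ≤ (-1)*(2*k+1) :=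
        mul_le_mul_of_nonneg_right (by omega) (by omega)
      linarith
    · linarith
    · have h1 : (1:ℤ)*(2*k+1) ≤ m*(2*k+1) :=
        mul_le_mul_of_nonneg_right (by omega) (by omega)
      linarith
  exact_mod_cast this

lemma setOf_isArc_full (hr1 : 2 * k * Real.pi / (2 * k + 1) ≤ r) (hrπ : r < Real.pi) :
    {A : Set S1 | IsArc r (thetaFull k) A} = arcC k r '' {j : ℕ | j ≤ 2*k} := by
  ext A
  simp only [Set.mem_setOf_eq, Set.mem_image]
  constructor
  · intro hA
    obtain ⟨x, hxA, ⟨i, hi, rfl⟩⟩ := hA.2.1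
    refine ⟨i, hi, ?_⟩
    obtain ⟨gR, mR, hgR, hmR, -⟩ := guardR_ex i hi
    obtain ⟨gL, mL, hgL, hmL, -⟩ := guardL_ex i hi
    have hiso := isArc_arcC_of (Θ := thetaFull k) hr1 hrπ i gR gL mR mL ⟨i, hi, rfl⟩ ⟨gR, hgR, rfl⟩ ⟨gL, hgL, rfl⟩
      hmR hmL (nex_full hr1 hrπ hi)
    have hsub := subset_arcC (Θ := thetaFull k) hr1 hrπ i gR gL mR mL ⟨gR, hgR, rfl⟩
      ⟨gL, hgL, rfl⟩ hmR hmL hA.1 hA.2.2.1 hxA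
    exact (hA.2.2.2 (arcC k r i) hiso.1 hiso.2.1 hiso.2.2.1 hsub).symm
  · rintro ⟨j, hj, rfl⟩
    obtain ⟨gR, mR, hgR, hmR, -⟩ := guardR_ex j hj
    obtain ⟨gL, mL, hgL, hmL, -⟩ := guardL_ex j hj
    exact isArc_arcC_of (Θ := thetaFull k) hr1 hrπ j gR gL mR mL ⟨j, hj, rfl⟩ ⟨gR, hgR, rfl⟩ ⟨gL, hgL, rfl⟩
      hmR hmL (nex_full hr1 hrπ hj)

lemma setOf_isArc_slim (hk : 1 ≤ k) (hr1 : 2 * k * Real.pi / (2 * k + 1) ≤ r)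
    (hrπ : r < Real.pi) :
    {A : Set S1 | IsArc r (thetaSlim k) A} =
      insert (arcM k r) (arcC k r '' {j : ℕ | (1 ≤ j ∧ j ≤ 2*k) ∧ j ≠ k ∧ j ≠ k+1}) := by
  ext A
  simp only [Set.mem_setOf_eq, Set.mem_insert_iff, Set.mem_image]
  constructor
  · intro hA
    obtain ⟨x, hxA, ⟨i, ⟨hi1, hi2⟩, rfl⟩⟩ := hA.2.1
    by_cases hik : i = k ∨ i = k + 1
    · left
      have hiso := isArc_arcM hk hr1 hrπ
      have hsub := subset_arcM hk hr1 hrπ hA.1 hA.2.2.1 hik hxA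
      exact hA.2.2.2 (arcM k r) hiso.1 hiso.2.1 hiso.2.2.1 hsub
    · right
      push_neg at hik
      refine ⟨i, ⟨⟨hi1, hi2⟩, hik.1, hik.2⟩, ?_⟩
      obtain ⟨gR, mR, hgRle, hmR, hgR1⟩ := guardR_ex i hi2
      obtain ⟨gL, mL, hgLle, hmL, hgL1⟩ := guardL_ex i hi2
      have hgRmem : ptn k gR ∈ thetaSlim k := ⟨gR, ⟨hgR1 hik.1, hgRle⟩, rfl⟩
      have hgLmem : ptn k gL ∈ thetaSlim k := ⟨gL, ⟨hgL1 hik.2 hi1, hgLle⟩, rfl⟩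
      have hiso := isArc_arcC_of (Θ := thetaSlim k) hr1 hrπ i gR gL mR mL ⟨i, ⟨hi1, hi2⟩, rfl⟩ hgRmem hgLmem
        hmR hmL (nex_slim hr1 hrπ hi2)
      have hsub := subset_arcC hr1 hrπ i gR gL mR mL hgRmem hgLmem hmR hmL hA.1 hA.2.2.1 hxA
      exact (hA.2.2.2 (arcC k r i) hiso.1 hiso.2.1 hiso.2.2.1 hsub).symm
  · rintro (rfl | ⟨j, ⟨⟨hj1, hj2⟩, hjk, hjk1⟩, rfl⟩)
    · exact isArc_arcM hk hr1 hrπ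
    · obtain ⟨gR, mR, hgRle, hmR, hgR1⟩ := guardR_ex j hj2
      obtain ⟨gL, mL, hgLle, hmL, hgL1⟩ := guardL_ex j hj2
      exact isArc_arcC_of (Θ := thetaSlim k) hr1 hrπ j gR gL mR mL ⟨j, ⟨hj1, hj2⟩, rfl⟩
        ⟨gR, ⟨hgR1 hjk, hgRle⟩, rfl⟩ ⟨gL, ⟨hgL1 hjk1 hj1, hgLle⟩, rfl⟩
        hmR hmL (nex_slim hr1 hrπ hj2)

lemma arcsCount_full (hr1 : 2 * k * Real.pi / (2 * k + 1) ≤ r) (hrπ : r < Real.pi) :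
    arcsCount r (thetaFull k) = 2*k+1 := by
  rw [arcsCount, setOf_isArc_full hr1 hrπ]
  have hset : {j : ℕ | j ≤ 2*k} = ↑(Finset.range (2*k+1)) := by
    ext j; simp [Nat.lt_succ_iff]
  rw [hset, Set.ncard_image_of_injOn ?_, Set.ncard_coe_finset, Finset.card_range]
  intro i hi j hj hij
  simp only [Finset.coe_range, Set.mem_Iio] at hi hj
  exact eq_of_ptn_mem hr1 hrπ (by omega) (by omega) (hij ▸ ptn_mem_arcC hr1 i)

lemma arcsCount_slim (hk : 1 ≤ k) (hr1 : 2 * k * Real.pi / (2 * k + 1) ≤ r)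
    (hrπ : r < Real.pi) : arcsCount r (thetaSlim k) = 2*k - 1 := by
  rw [arcsCount, setOf_isArc_slim hk hr1 hrπ]
  set T := ((Finset.Icc 1 (2*k)).erase k).erase (k+1) with hT
  have hset : {j : ℕ | (1 ≤ j ∧ j ≤ 2*k) ∧ j ≠ k ∧ j ≠ k+1} = ↑T := by
    ext j
    simp only [hT, Finset.coe_erase, Set.mem_diff, Finset.mem_coe, Finset.mem_erase,
      Finset.mem_Icc, Set.mem_setOf_eq, Set.mem_singleton_iff]
    omega
  rw [hset]
  have hinj : Set.InjOn (arcC k r) ↑T := by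
    intro i hi j hj hij
    simp only [hT, Finset.coe_erase, Set.mem_diff, Finset.mem_coe, Finset.mem_erase,
      Finset.mem_Icc] at hi hj
    exact eq_of_ptn_mem hr1 hrπ (by omega) (by omega) (hij ▸ ptn_mem_arcC hr1 i)
  have hnotmem : arcM k r ∉ arcC k r '' ↑T := by
    rintro ⟨j, hj, hEq⟩
    simp only [hT, Finset.coe_erase, Set.mem_diff, Finset.mem_coe, Finset.mem_erase,
      Finset.mem_Icc, Set.mem_singleton_iff] at hj
    have hmem : ptn k k ∈ arcC k r j := hEq ▸ ptn_mem_arcM hr1 (Or.inl rfl)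
    have := eq_of_ptn_mem hr1 hrπ (by omega) (by omega) hmem
    omega
  rw [Set.ncard_insert_of_notMem hnotmem ((T.finite_toSet).image _),
    Set.ncard_image_of_injOn hinj, Set.ncard_coe_finset, hT,
    Finset.card_erase_of_mem (by simp [Finset.mem_erase, Finset.mem_Icc]; omega),
    Finset.card_erase_of_mem (by simp [Finset.mem_Icc]; omega),
    Nat.card_Icc]
  omega

/-! ### The measures -/
open scoped ENNReal BoundedContinuousFunction Topology

lemma nnsmul_coe (c : ℝ≥0) (x : ℝ≥0∞) : c • x = (c : ℝ≥0∞) * x := by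
  rw [ENNReal.smul_def, smul_eq_mul]

/-- The limit measure. -/
def mlim (k : ℕ) : Measure S1 :=
  ∑ j ∈ Finset.Icc 1 (2 * k),
    ((2 * k : ℝ≥0))⁻¹ • MeasureTheory.Measure.dirac ((2 * j * Real.pi / (2 * k + 1) : ℝ) : S1)

/-- The approximating measures. -/
def mseq (k n : ℕ) : Measure S1 :=
  ((n : ℝ≥0))⁻¹ • MeasureTheory.Measure.dirac ((0 : ℝ) : S1) +
    ∑ j ∈ Finset.Icc 1 (2 * k),
      (((2 * k : ℝ≥0))⁻¹ - ((2 * k * n : ℝ≥0))⁻¹) •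
        MeasureTheory.Measure.dirac ((2 * j * Real.pi / (2 * k + 1) : ℝ) : S1)

variable {k : ℕ} {r : ℝ}

lemma dirac_pt (j : ℕ) :
    MeasureTheory.Measure.dirac ((2 * j * Real.pi / (2 * k + 1) : ℝ) : S1) =
      MeasureTheory.Measure.dirac (ptn k j) := rfl

lemma ptn_zero : ptn k 0 = ((0 : ℝ) : S1) := by unfold ptn; norm_num

lemma ptn_inj {i j : ℕ} (hi : i ≤ 2*k) (hj : j ≤ 2*k) (hij : ptn k i = ptn k j) : i = j := by
  have hπ := Real.pi_pos
  have hrπ' : 2*(k:ℝ)*Real.pi/(2*(k:ℝ)+1) < Real.pi := by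
    rw [div_lt_iff₀ (by positivity)]; nlinarith
  exact eq_of_ptn_mem le_rfl hrπ' hi hj (by rw [hij]; exact ptn_mem_arcC le_rfl j)

lemma coeff_eq (k n : ℕ) :
    ((2 * k : ℝ≥0))⁻¹ - ((2 * k * n : ℝ≥0))⁻¹ = (1 - (n:ℝ≥0)⁻¹) * ((2 * k : ℝ≥0))⁻¹ := by
  rw [tsub_mul, one_mul]
  congr 1
  rw [mul_inv, mul_comm]

lemma mseq_eq (k n : ℕ) :
    mseq k n = ((n : ℝ≥0))⁻¹ • MeasureTheory.Measure.dirac ((0 : ℝ) : S1) +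
      (1 - (n:ℝ≥0)⁻¹) • mlim k := by
  unfold mseq mlim
  congr 1
  rw [Finset.smul_sum]
  exact Finset.sum_congr rfl fun j _ => by rw [smul_smul, coeff_eq]

lemma two_k_ne (hk : 1 ≤ k) : ((2 * k : ℝ≥0)) ≠ 0 := by
  have : ((2 * k : ℕ) : ℝ≥0) ≠ 0 := Nat.cast_ne_zero.mpr (by omega)
  simpa using this

lemma mlim_univ (hk : 1 ≤ k) : mlim k Set.univ = 1 := by
  simp only [mlim, Measure.finset_sum_apply, Measure.smul_apply, measure_univ, smul_eq_mul,
    mul_one, Finset.sum_const, Nat.card_Icc, ENNReal.smul_def, nsmul_eq_mul]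
  rw [show 2*k+1-1 = 2*k from rfl]
  rw [show ((2*k : ℕ) : ℝ≥0∞) = ((2 * (k:ℝ≥0) : ℝ≥0) : ℝ≥0∞) by push_cast; ring]
  rw [ENNReal.coe_inv (two_k_ne hk), ENNReal.mul_inv_cancel]
  · simp only [ne_eq, ENNReal.coe_eq_zero]; exact two_k_ne hk
  · exact ENNReal.coe_ne_top

lemma inv_nat_le_one (n : ℕ) : ((n : ℝ≥0))⁻¹ ≤ 1 := by
  cases n with
  | zero => simp
  | succ m =>
    exact inv_le_one_of_one_le₀ (by exact_mod_cast Nat.one_le_iff_ne_zero.mpr (Nat.succ_ne_zero m))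

lemma mseq_univ (hk : 1 ≤ k) (n : ℕ) : mseq k n Set.univ = 1 := by
  rw [mseq_eq]
  simp only [Measure.add_apply, Measure.smul_apply, measure_univ, mlim_univ hk, smul_eq_mul,
    mul_one, ENNReal.smul_def]
  rw [← ENNReal.coe_add, add_tsub_cancel_of_le (inv_nat_le_one n)]
  simp

lemma isProb_mlim (hk : 1 ≤ k) : IsProbabilityMeasure (mlim k) := ⟨mlim_univ hk⟩

lemma isProb_mseq (hk : 1 ≤ k) (n : ℕ) : IsProbabilityMeasure (mseq k n) := ⟨mseq_univ hk n⟩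

lemma mlim_single_pt (hk : 1 ≤ k) {i : ℕ} (hi1 : 1 ≤ i) (hi2 : i ≤ 2*k) :
    mlim k {ptn k i} = (((((2 * k : ℝ≥0))⁻¹ : ℝ≥0)) : ℝ≥0∞) := by
  rw [mlim, Measure.finset_sum_apply]
  rw [Finset.sum_eq_single_of_mem i (Finset.mem_Icc.mpr ⟨hi1, hi2⟩)]
  · rw [dirac_pt, Measure.smul_apply, Measure.dirac_apply,
      Set.indicator_of_mem (Set.mem_singleton _), nnsmul_coe]
    simp only [Pi.one_apply, mul_one]
  · intro j hj hji
    rw [Finset.mem_Icc] at hj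
    rw [dirac_pt, Measure.smul_apply, Measure.dirac_apply,
      Set.indicator_of_notMem, smul_zero]
    intro hmem
    exact hji (ptn_inj hj.2 hi2 hmem)

lemma mlim_single_notmem (x : S1) (hx : x ∉ thetaSlim k) : mlim k {x} = 0 := by
  rw [mlim, Measure.finset_sum_apply]
  refine Finset.sum_eq_zero fun j hj => ?_
  rw [Finset.mem_Icc] at hj
  rw [dirac_pt, Measure.smul_apply, Measure.dirac_apply, Set.indicator_of_notMem, smul_zero]
  intro hmem
  exact hx ⟨j, ⟨hj.1, hj.2⟩, (Set.mem_singleton_iff.mp hmem).symm ▸ rfl⟩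

lemma thetaSlim_subset : thetaSlim k ⊆ thetaFull k := by
  rintro x ⟨j, ⟨hj1, hj2⟩, rfl⟩; exact ⟨j, hj2, rfl⟩

lemma ptn_zero_notmem_slim : ptn k 0 ∉ thetaSlim k := by
  rintro ⟨j, ⟨hj1, hj2⟩, hEq⟩
  have := ptn_inj hj2 (Nat.zero_le _) hEq
  omega

lemma mseq_single_zero (hk : 1 ≤ k) (n : ℕ) :
    mseq k n {ptn k 0} = (((((n:ℝ≥0))⁻¹ : ℝ≥0)) : ℝ≥0∞) := by
  rw [mseq_eq, Measure.add_apply, Measure.smul_apply, Measure.smul_apply,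
    mlim_single_notmem _ ptn_zero_notmem_slim, smul_zero, add_zero, ← ptn_zero,
    Measure.dirac_apply, Set.indicator_of_mem (Set.mem_singleton _), nnsmul_coe]
  simp only [Pi.one_apply, mul_one]

lemma mseq_single_pt (hk : 1 ≤ k) (n : ℕ) {i : ℕ} (hi1 : 1 ≤ i) (hi2 : i ≤ 2*k) :
    mseq k n {ptn k i} = (((1 - (n:ℝ≥0)⁻¹) * ((2 * k : ℝ≥0))⁻¹ : ℝ≥0) : ℝ≥0∞) := by
  have hne : ((0:ℝ):S1) ∉ ({ptn k i} : Set S1) := by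
    rw [Set.mem_singleton_iff, ← ptn_zero]
    intro hEq
    have := ptn_inj (Nat.zero_le _) hi2 hEq
    omega
  rw [mseq_eq, Measure.add_apply, Measure.smul_apply, Measure.smul_apply,
    Measure.dirac_apply, Set.indicator_of_notMem hne, smul_zero, zero_add,
    mlim_single_pt hk hi1 hi2, nnsmul_coe]
  rw [← ENNReal.coe_mul]

lemma mseq_single_notmem (n : ℕ) {x : S1} (hx : x ∉ thetaFull k) : mseq k n {x} = 0 := by
  have hne : ((0:ℝ):S1) ∉ ({x} : Set S1) := by
    rw [Set.mem_singleton_iff, ← ptn_zero]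
    intro hEq
    exact hx (hEq ▸ ⟨0, Nat.zero_le _, rfl⟩)
  rw [mseq_eq, Measure.add_apply, Measure.smul_apply, Measure.smul_apply,
    Measure.dirac_apply, Set.indicator_of_notMem hne, smul_zero, zero_add,
    mlim_single_notmem _ (fun h => hx (thetaSlim_subset h)), smul_zero]

lemma suppSet_coe {μp : ProbabilityMeasure S1} :
    suppSet μp = {x | (μp : Measure S1) {x} ≠ 0} := by
  ext x
  simp only [suppSet, Set.mem_setOf_eq]
  exact not_congr (μp.null_iff_toMeasure_null {x})

lemma supp_mlim (hk : 1 ≤ k) {μp : ProbabilityMeasure S1} (h : (μp : Measure S1) = mlim k) :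
    suppSet μp = thetaSlim k := by
  rw [suppSet_coe]
  ext x
  simp only [Set.mem_setOf_eq, h]
  constructor
  · intro hne
    by_contra hx
    exact hne (mlim_single_notmem x hx)
  · rintro ⟨j, ⟨hj1, hj2⟩, rfl⟩
    rw [mlim_single_pt hk hj1 hj2]
    simp only [ne_eq, ENNReal.coe_eq_zero]
    exact inv_ne_zero (two_k_ne hk)

lemma supp_mseq (hk : 1 ≤ k) {n : ℕ} (hn : 2 ≤ n) {μp : ProbabilityMeasure S1}
    (h : (μp : Measure S1) = mseq k n) : suppSet μp = thetaFull k := by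
  rw [suppSet_coe]
  ext x
  simp only [Set.mem_setOf_eq, h]
  constructor
  · intro hne
    by_contra hx
    exact hne (mseq_single_notmem n hx)
  · rintro ⟨j, hj, rfl⟩
    rcases Nat.eq_zero_or_pos j with rfl | hj1
    · rw [mseq_single_zero hk n]
      simp only [ne_eq, ENNReal.coe_eq_zero]
      exact inv_ne_zero (Nat.cast_ne_zero.mpr (by omega))
    · rw [mseq_single_pt hk n hj1 hj]
      simp only [ne_eq, ENNReal.coe_eq_zero]
      refine mul_ne_zero ?_ (inv_ne_zero (two_k_ne hk))
      rw [ne_eq, tsub_eq_zero_iff_le, not_le, ← NNReal.coe_lt_coe]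
      push_cast
      exact inv_lt_one_of_one_lt₀ (by exact_mod_cast (by omega : 1 < n))

lemma mlim_apply_one (hk : 1 ≤ k) {s : Set S1}
    (hs : ∀ j, 1 ≤ j → j ≤ 2*k → ptn k j ∈ s) : mlim k s = 1 := by
  have heq : mlim k s = mlim k Set.univ := by
    rw [mlim, Measure.finset_sum_apply, Measure.finset_sum_apply]
    refine Finset.sum_congr rfl fun j hj => ?_
    rw [Finset.mem_Icc] at hj
    rw [dirac_pt, Measure.smul_apply, Measure.smul_apply, Measure.dirac_apply,
      Measure.dirac_apply, Set.indicator_of_mem (hs j hj.1 hj.2),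
      Set.indicator_of_mem (Set.mem_univ _)]
  rw [heq, mlim_univ hk]

lemma mseq_apply_one (hk : 1 ≤ k) (n : ℕ) {s : Set S1} (h0 : ((0:ℝ):S1) ∈ s)
    (hs : ∀ j, 1 ≤ j → j ≤ 2*k → ptn k j ∈ s) : mseq k n s = 1 := by
  rw [mseq_eq, Measure.add_apply, Measure.smul_apply, Measure.smul_apply,
    Measure.dirac_apply, Set.indicator_of_mem h0, mlim_apply_one hk hs]
  simp only [nnsmul_coe, Pi.one_apply, mul_one]
  rw [← ENNReal.coe_add, add_tsub_cancel_of_le (inv_nat_le_one n)]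
  simp

lemma probApply_eq_one {μp : ProbabilityMeasure S1} {s : Set S1}
    (h : (μp : Measure S1) s = 1) : μp s = 1 := by
  have h2 : μp s = ((μp : Measure S1) s).toNNReal := rfl
  rw [h2, h]; rfl

lemma integral_mseq (hk : 1 ≤ k) (n : ℕ) (f : S1 →ᵇ ℝ) :
    ∫ x, f x ∂(mseq k n) = (((n:ℝ≥0))⁻¹ : ℝ) * f (((0:ℝ):S1)) +
      ((1 - (n:ℝ≥0)⁻¹ : ℝ≥0) : ℝ) * ∫ x, f x ∂(mlim k) := by
  haveI := isProb_mlim hk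
  rw [mseq_eq, integral_add_measure (f.integrable _) (f.integrable _),
    integral_smul_nnreal_measure, integral_smul_nnreal_measure, integral_dirac]
  simp [NNReal.smul_def]

lemma tendsto_int (hk : 1 ≤ k) (f : S1 →ᵇ ℝ) :
    Tendsto (fun n => ∫ x, f x ∂(mseq k n)) atTop (𝓝 (∫ x, f x ∂(mlim k))) := by
  simp only [integral_mseq hk _ f]
  have h1 : Tendsto (fun n : ℕ => (((n:ℝ≥0))⁻¹ : ℝ)) atTop (𝓝 0) := by
    simp only [NNReal.coe_natCast]
    exact tendsto_inv_atTop_nhds_zero_nat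
  have h2 : Tendsto (fun n : ℕ => ((1 - (n:ℝ≥0)⁻¹ : ℝ≥0) : ℝ)) atTop (𝓝 1) := by
    have hco : ∀ n : ℕ, ((1 - (n:ℝ≥0)⁻¹ : ℝ≥0) : ℝ) = 1 - (((n:ℝ≥0))⁻¹ : ℝ) := fun n =>
      NNReal.coe_sub (inv_nat_le_one n)
    simp only [hco]
    simpa using tendsto_const_nhds.sub h1
  have hfin := (h1.mul (tendsto_const_nhds (x := f (((0:ℝ):S1))))).add
    (h2.mul (tendsto_const_nhds (x := ∫ x, f x ∂(mlim k))))
  rw [zero_mul, one_mul, zero_add] at hfin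
  exact hfin

lemma diam_thetaFull (hr1 : 2 * k * Real.pi / (2 * k + 1) ≤ r) (hrπ : r < Real.pi) :
    Metric.diam (thetaFull k) ≤ r := by
  apply Metric.diam_le_of_forall_dist_le (r_nonneg hr1)
  rintro x ⟨i, hi, rfl⟩ y ⟨i', hi', rfl⟩
  have := dist_ptn_le hr1 hrπ i i' hi hi' (2*i'*bet k) (by simpa using hw_nonneg hr1)
  rwa [← ptn_eq] at this

lemma diam_thetaSlim (hr1 : 2 * k * Real.pi / (2 * k + 1) ≤ r) (hrπ : r < Real.pi) :
    Metric.diam (thetaSlim k) ≤ r := by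
  apply Metric.diam_le_of_forall_dist_le (r_nonneg hr1)
  rintro x ⟨i, ⟨hi1, hi⟩, rfl⟩ y ⟨i', ⟨hi1', hi'⟩, rfl⟩
  have := dist_ptn_le hr1 hrπ i i' hi hi' (2*i'*bet k) (by simpa using hw_nonneg hr1)
  rwa [← ptn_eq] at this

end VRmAux

open VRmAux in
theorem V_not_closed_not_open (k : ℕ) (hk : 1 ≤ k) (r : ℝ)
    (hr1 : 2 * k * Real.pi / (2 * k + 1) ≤ r) (hrπ : r < Real.pi) :
    ∃ (μseq : ℕ → Pfin S1) (μlim : Pfin S1),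
      (∀ n : ℕ, ((μseq n).1 : Measure S1) =
          ((n : ℝ≥0))⁻¹ • MeasureTheory.Measure.dirac ((0 : ℝ) : S1) +
          ∑ j ∈ Finset.Icc 1 (2 * k),
            (((2 * k : ℝ≥0))⁻¹ - ((2 * k * n : ℝ≥0))⁻¹) •
              MeasureTheory.Measure.dirac ((2 * j * Real.pi / (2 * k + 1) : ℝ) : S1)) ∧
      ((μlim.1 : Measure S1) =
          ∑ j ∈ Finset.Icc 1 (2 * k),
            ((2 * k : ℝ≥0))⁻¹ •
              MeasureTheory.Measure.dirac ((2 * j * Real.pi / (2 * k + 1) : ℝ) : S1)) ∧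
      (∀ n : ℕ, 2 ≤ n → μseq n ∈ V r k) ∧
      Filter.Tendsto μseq Filter.atTop (nhds μlim) ∧
      μlim ∈ V r (k - 1) ∧
      ¬ IsClosed {ν : ↥(VRm r) | (ν : Pfin S1) ∈ V r k} ∧
      ¬ IsOpen {ν : ↥(VRm r) | (ν : Pfin S1) ∈ V r (k - 1)} := by
  classical
  set F : Finset S1 := (Finset.range (2*k+1)).image (ptn k) with hF
  have h0mem : ((0:ℝ):S1) ∈ (↑F : Set S1) := by
    rw [← ptn_zero]
    exact Finset.mem_coe.mpr (Finset.mem_image_of_mem _ (Finset.mem_range.mpr (by omega)))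
  have hjmem : ∀ j, 1 ≤ j → j ≤ 2*k → ptn k j ∈ (↑F : Set S1) := fun j h1 h2 =>
    Finset.mem_coe.mpr (Finset.mem_image_of_mem _ (Finset.mem_range.mpr (by omega)))
  set μS : ℕ → Pfin S1 := fun n =>
    ⟨⟨mseq k n, isProb_mseq hk n⟩, F, probApply_eq_one (mseq_apply_one hk n h0mem hjmem)⟩
    with hμS
  set μL : Pfin S1 :=
    ⟨⟨mlim k, isProb_mlim hk⟩, F, probApply_eq_one (mlim_apply_one hk hjmem)⟩ with hμL
  have hV : ∀ n : ℕ, 2 ≤ n → μS n ∈ V r k := by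
    intro n hn
    have hsup : suppSet (μS n).1 = thetaFull k := supp_mseq hk hn rfl
    refine ⟨?_, ?_⟩
    · show Metric.diam (suppSet (μS n).1) ≤ r
      rw [hsup]; exact diam_thetaFull hr1 hrπ
    · show arcsCount r (suppSet (μS n).1) = 2*k+1
      rw [hsup]; exact arcsCount_full hr1 hrπ
  have hVl : μL ∈ V r (k-1) := by
    have hsup : suppSet μL.1 = thetaSlim k := supp_mlim hk rfl
    refine ⟨?_, ?_⟩
    · show Metric.diam (suppSet μL.1) ≤ r
      rw [hsup]; exact diam_thetaSlim hr1 hrπ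
    · show arcsCount r (suppSet μL.1) = 2*(k-1)+1
      rw [hsup, arcsCount_slim hk hr1 hrπ]; omega
  have ht : Filter.Tendsto μS Filter.atTop (nhds μL) := by
    rw [tendsto_subtype_rng]
    exact MeasureTheory.ProbabilityMeasure.tendsto_iff_forall_integral_tendsto.mpr
      (fun f => tendsto_int hk f)
  have hν : ∀ n : ℕ, μS (n+2) ∈ VRm r := fun n => (hV (n+2) (by omega)).1
  have hLmem : μL ∈ VRm r := hVl.1
  have htν : Filter.Tendsto (fun n => (⟨μS (n+2), hν n⟩ : ↥(VRm r))) Filter.atTop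
      (nhds ⟨μL, hLmem⟩) := by
    rw [tendsto_subtype_rng]
    exact ht.comp (tendsto_add_atTop_nat 2)
  have hnc : ¬ IsClosed {ν : ↥(VRm r) | (ν : Pfin S1) ∈ V r k} := by
    intro hcl
    have hmem := hcl.mem_of_tendsto htν
      (Filter.Eventually.of_forall fun n => hV (n+2) (by omega))
    have h1 : arcsCountM r μL = 2*k+1 := hmem.2
    have h2 : arcsCountM r μL = 2*(k-1)+1 := hVl.2
    omega
  have hno : ¬ IsOpen {ν : ↥(VRm r) | (ν : Pfin S1) ∈ V r (k - 1)} := by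
    intro hop
    have hcl := hop.isClosed_compl
    have hmem := hcl.mem_of_tendsto htν (Filter.Eventually.of_forall fun n => ?_)
    · exact hmem hVl
    · intro hbad
      have h1 : arcsCountM r (μS (n+2)) = 2*(k-1)+1 := hbad.2
      have h2 : arcsCountM r (μS (n+2)) = 2*k+1 := (hV (n+2) (by omega)).2
      omega
  exact ⟨μS, μL, fun n => rfl, rfl, hV, ht, hVl, hnc, hno⟩
end
end

section
/- Let X be a compact metric space, let P^fin(X) denote the set of finitely supported Borel probability measures on X with the topology of weak convergence, let U ⊆ P^fin(X) with the subspace topology, and let Q(X,U) = {(x,μ) ∈ X × U : x ∈ supp(μ)} with the subspace topology of the product. Suppose H : Q(X,U) × [0,1] → X is a continuous map which is a support homotopy in U, i.e. for every t ∈ [0,1] and every μ = Σ_{i=1}^n a_i·δ_{x_i} ∈ U with a_i > 0 for all i, the measure Σ_{i=1}^n a_i·δ_{H(x_i,μ,t)} lies in U. Then the map H̃ : U × [0,1] → U given by H̃(μ,t) = Σ_{i=1}^n a_i·δ_{H(x_i,μ,t)} for μ = Σ_{i=1}^n a_i·δ_{x_i} with all a_i > 0 is well-defined and continuous. -/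
open MeasureTheory Metric Filter Topology
open scoped unitInterval NNReal ENNReal Classical

noncomputable section

section Aux

variable {X : Type*} [MeasurableSpace X] [MeasurableSingletonClass X]

lemma Pfin.coe_singleton (μ : Pfin X) (y : X) :
    ((μ.1 {y} : ℝ≥0) : ℝ≥0∞) = (μ.1 : Measure X) {y} :=
  ProbabilityMeasure.ennreal_coeFn_eq_coeFn_toMeasure μ.1 {y}

lemma Pfin.suppSet_finite (μ : Pfin X) : (suppSet μ.1).Finite := by
  obtain ⟨S, hS⟩ := μ.2
  apply Set.Finite.subset S.finite_toSet
  intro x hx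
  by_contra hxS
  have hSm : MeasurableSet (↑S : Set X) := S.finite_toSet.measurableSet
  have h1 : (μ.1 : Measure X) (↑S : Set X) = 1 := by
    rw [← ProbabilityMeasure.ennreal_coeFn_eq_coeFn_toMeasure, hS, ENNReal.coe_one]
  have h0 : (μ.1 : Measure X) ((↑S : Set X)ᶜ) = 0 := by
    rw [prob_compl_eq_zero_iff hSm]; exact h1
  have hz : (μ.1 : Measure X) {x} = 0 :=
    measure_mono_null (by simpa using hxS) h0
  have : μ.1 {x} = 0 := by
    have := Pfin.coe_singleton μ x
    rw [hz] at this
    exact_mod_cast this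
  exact hx this

def Pfin.atoms (μ : Pfin X) : Finset X := (Pfin.suppSet_finite μ).toFinset

lemma Pfin.mem_atoms {μ : Pfin X} {y : X} :
    y ∈ μ.atoms ↔ (μ.1 : Measure X) {y} ≠ 0 := by
  rw [Pfin.atoms, Set.Finite.mem_toFinset]
  constructor
  · intro h h0
    apply h
    have := Pfin.coe_singleton μ y
    rw [h0] at this
    exact_mod_cast this
  · intro h h0
    apply h
    rw [← Pfin.coe_singleton, h0, ENNReal.coe_zero]

lemma Pfin.compl_atoms_null (μ : Pfin X) :
    (μ.1 : Measure X) ((↑μ.atoms : Set X)ᶜ) = 0 := by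
  obtain ⟨S, hS⟩ := μ.2
  have h1 : (μ.1 : Measure X) (↑S : Set X) = 1 := by
    rw [← ProbabilityMeasure.ennreal_coeFn_eq_coeFn_toMeasure, hS, ENNReal.coe_one]
  have hSc : (μ.1 : Measure X) ((↑S : Set X)ᶜ) = 0 := by
    rw [prob_compl_eq_zero_iff S.finite_toSet.measurableSet]; exact h1
  have hsub : ((↑μ.atoms : Set X)ᶜ) ⊆ ((↑S : Set X)ᶜ) ∪ (⋃ y ∈ S.filter (fun y => y ∉ μ.atoms), {y}) := by
    intro z hz
    by_cases hzS : z ∈ S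
    · right
      simp only [Set.mem_iUnion, Finset.mem_filter]
      exact ⟨z, ⟨hzS, hz⟩, rfl⟩
    · exact Or.inl hzS
  refine measure_mono_null hsub (measure_union_null hSc ?_)
  refine le_antisymm ?_ (zero_le)
  refine le_trans (measure_biUnion_finset_le _ _) ?_
  have : ∀ y ∈ S.filter (fun y => y ∉ μ.atoms), (μ.1 : Measure X) {y} = 0 := by
    intro y hy
    have := (Finset.mem_filter.mp hy).2
    rw [Pfin.mem_atoms, not_not] at this
    exact this
  rw [Finset.sum_congr rfl this]
  simp

lemma Pfin.apply_eq_sum_atoms (μ : Pfin X) {E : Set X} (hE : MeasurableSet E) :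
    (μ.1 : Measure X) E = ∑ y ∈ μ.atoms.filter (· ∈ E), (μ.1 : Measure X) {y} := by
  classical
  have hAm : MeasurableSet (↑μ.atoms : Set X) := μ.atoms.finite_toSet.measurableSet
  have key : (μ.1 : Measure X) E = (μ.1 : Measure X) (E ∩ ↑μ.atoms) := by
    have := measure_inter_add_diff E hAm (μ := (μ.1 : Measure X))
    have hdiff : (μ.1 : Measure X) (E \ ↑μ.atoms) = 0 :=
      measure_mono_null (fun z hz => hz.2) (Pfin.compl_atoms_null μ)
    rw [← this, hdiff, add_zero]
  rw [key]
  have hset : E ∩ ↑μ.atoms = ⋃ y ∈ μ.atoms.filter (· ∈ E), {y} := by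
    ext z
    simp only [Set.mem_inter_iff, Set.mem_iUnion, Finset.mem_filter, Set.mem_singleton_iff,
      Finset.mem_coe]
    constructor
    · rintro ⟨hzE, hzA⟩; exact ⟨z, ⟨hzA, hzE⟩, rfl⟩
    · rintro ⟨y, ⟨hyA, hyE⟩, rfl⟩; exact ⟨hyE, hyA⟩
  rw [hset, measure_biUnion_finset ?_ (fun y _ => measurableSet_singleton y)]
  intro a _ b _ hab
  exact Set.disjoint_singleton.mpr hab

lemma Pfin.toMeasure_eq_sum (μ : Pfin X) :
    (μ.1 : Measure X) = ∑ y ∈ μ.atoms, (μ.1 {y} : ℝ≥0) • Measure.dirac y := by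
  classical
  ext E hE
  rw [Pfin.apply_eq_sum_atoms μ hE, Measure.finset_sum_apply]
  simp_rw [Measure.smul_apply, Measure.dirac_apply' _ hE, ENNReal.smul_def, smul_eq_mul]
  rw [Finset.sum_filter]
  refine Finset.sum_congr rfl ?_
  intro y _
  by_cases hyE : y ∈ E
  · simp [Set.indicator_of_mem hyE, Pfin.coe_singleton, hyE]
  · simp [Set.indicator_of_notMem hyE, hyE]

lemma Pfin.sum_atoms_eq_one (μ : Pfin X) :
    ∑ y ∈ μ.atoms, (μ.1 {y} : ℝ≥0) = 1 := by
  have h := Pfin.apply_eq_sum_atoms μ (MeasurableSet.univ (α := X))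
  rw [measure_univ] at h
  simp only [Set.mem_univ, Finset.filter_true] at h
  have : ((∑ y ∈ μ.atoms, (μ.1 {y} : ℝ≥0) : ℝ≥0) : ℝ≥0∞) = 1 := by
    rw [ENNReal.coe_finset_sum]
    simp_rw [Pfin.coe_singleton]
    exact h.symm
  exact_mod_cast this

end Aux

section Aux2

variable {X : Type*} [MeasurableSpace X] [MeasurableSingletonClass X]
variable {μ : Pfin X} {n : ℕ} {a : Fin n → ℝ≥0} {x : Fin n → X}

lemma Pfin.fiber_eq (hdec : (μ.1 : Measure X) = ∑ i, (a i) • Measure.dirac (x i)) (y : X) :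
    (μ.1 : Measure X) {y} = ∑ i ∈ Finset.univ.filter (fun i => x i = y), (a i : ℝ≥0∞) := by
  rw [hdec, Measure.finset_sum_apply]
  simp_rw [Measure.smul_apply, Measure.dirac_apply' _ (measurableSet_singleton y),
    ENNReal.smul_def, smul_eq_mul]
  rw [Finset.sum_filter]
  refine Finset.sum_congr rfl fun i _ => ?_
  by_cases h : x i = y
  · simp [h, Set.indicator_of_mem]
  · have : x i ∉ ({y} : Set X) := by simpa using h
    simp [h, Set.indicator_of_notMem this]

lemma Pfin.mem_atoms_of_decomp (hdec : (μ.1 : Measure X) = ∑ i, (a i) • Measure.dirac (x i))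
    (hpos : ∀ i, 0 < a i) (i : Fin n) : x i ∈ μ.atoms := by
  rw [Pfin.mem_atoms, Pfin.fiber_eq hdec]
  intro h0
  have hi : i ∈ Finset.univ.filter (fun j => x j = x i) := by simp
  have := Finset.sum_eq_zero_iff.mp h0 i hi
  exact absurd (by exact_mod_cast this) (hpos i).ne'

lemma Pfin.coeFn_eq_fiber_sum (hdec : (μ.1 : Measure X) = ∑ i, (a i) • Measure.dirac (x i))
    (y : X) : μ.1 {y} = ∑ i ∈ Finset.univ.filter (fun i => x i = y), a i := by
  have h := Pfin.fiber_eq hdec y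
  rw [← Pfin.coe_singleton] at h
  rw [← ENNReal.coe_finset_sum] at h
  exact_mod_cast h

lemma Pfin.sum_dirac_comp (F : X → X)
    (hdec : (μ.1 : Measure X) = ∑ i, (a i) • Measure.dirac (x i)) (hpos : ∀ i, 0 < a i) :
    ∑ i, (a i) • Measure.dirac (F (x i)) =
      ∑ y ∈ μ.atoms, (μ.1 {y} : ℝ≥0) • Measure.dirac (F y) := by
  rw [← Finset.sum_fiberwise_of_maps_to (g := x) (t := μ.atoms)
    (fun i _ => Pfin.mem_atoms_of_decomp hdec hpos i)]
  refine Finset.sum_congr rfl fun y hy => ?_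
  have hterm : ∀ i ∈ Finset.univ.filter (fun i => x i = y),
      (a i) • Measure.dirac (F (x i)) = (a i) • Measure.dirac (F y) := by
    intro i hi
    rw [(Finset.mem_filter.mp hi).2]
  rw [Finset.sum_congr rfl hterm, ← Finset.sum_smul, ← Pfin.coeFn_eq_fiber_sum hdec]

lemma integrable_dirac' {f : X → ℝ} (y : X) : Integrable f (Measure.dirac y) := by
  refine (integrable_const (f y)).congr ?_
  rw [MeasureTheory.ae_dirac_eq]
  exact Filter.eventually_pure.mpr rfl

lemma integral_sum_smul_dirac (s : Finset X) (w : X → ℝ≥0) (g : X → X) (f : X → ℝ) :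
    ∫ z, f z ∂(∑ y ∈ s, (w y) • Measure.dirac (g y)) = ∑ y ∈ s, ((w y : ℝ)) * f (g y) := by
  have hint : ∀ y ∈ s, Integrable f ((w y) • Measure.dirac (g y)) := by
    intro y _
    have h : ((w y : ℝ≥0) • Measure.dirac (g y)) = ((w y : ℝ≥0∞) • Measure.dirac (g y)) := rfl
    rw [h]
    exact (integrable_dirac' (g y)).smul_measure ENNReal.coe_ne_top
  rw [integral_finset_sum_measure hint]
  refine Finset.sum_congr rfl fun y _ => ?_
  have h : ((w y : ℝ≥0) • Measure.dirac (g y)) = ((w y : ℝ≥0∞) • Measure.dirac (g y)) := rfl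
  rw [h, integral_smul_measure, integral_dirac]
  simp

end Aux2

/-- The map induced on points by `H` at "time" `p`, extended by the identity off the support. -/
def Fmap {X : Type*} [MetricSpace X] [MeasurableSpace X] [OpensMeasurableSpace X]
    {U : Set (Pfin X)} (Q : Set (X × ↥U)) (H : C(↥Q × I, X)) (p : ↥U × I) (y : X) : X :=
  if h : (y, p.1) ∈ Q then H (⟨(y, p.1), h⟩, p.2) else y


section ContAux
variable {X : Type*} [MetricSpace X] [CompactSpace X] [MeasurableSpace X] [BorelSpace X]
    (U : Set (Pfin X)) (Q : Set (X × ↥U)) (H : C(↥Q × I, X))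

set_option maxHeartbeats 1000000 in
lemma continuity_aux (hmem : ∀ (z : X) (μ : ↥U), ((z, μ) ∈ Q) ↔ (μ.1.1 : Measure X) {z} ≠ 0)
    (G : ↥U × I → ↥U)
    (hG : ∀ p : ↥U × I, ((G p).1.1 : Measure X) =
      ∑ y ∈ (p.1.1 : Pfin X).atoms, (p.1.1.1 {y} : ℝ≥0) • Measure.dirac (Fmap Q H p y)) :
    Continuous G := by
  classical
  have hatomQ : ∀ (μ : ↥U) (z : X), z ∈ μ.1.atoms → (z, μ) ∈ Q := by
    intro μ z hz
    exact (hmem z μ).mpr (Pfin.mem_atoms.mp hz)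
  have hPM : Continuous fun p : ↥U × I => ((G p).1.1 : ProbabilityMeasure X) := by
    rw [continuous_iff_continuousAt]
    intro p₀
    have hmain : Tendsto (fun p : ↥U × I => ((G p).1.1 : ProbabilityMeasure X)) (𝓝 p₀)
        (𝓝 ((G p₀).1.1 : ProbabilityMeasure X)) := by
      rw [ProbabilityMeasure.tendsto_iff_forall_integral_tendsto]
      intro f
      have hSint : ∀ p : ↥U × I, ∫ z, f z ∂((G p).1.1 : Measure X)
          = ∑ y ∈ (p.1.1 : Pfin X).atoms, ((p.1.1.1 {y} : ℝ≥0) : ℝ) * f (Fmap Q H p y) := by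
        intro p
        rw [hG p]
        exact integral_sum_smul_dirac _ _ _ f
      simp only [hSint]
      rw [Metric.tendsto_nhds]
      intro ε hε
      -- notation
      set A₀ : Finset X := (p₀.1.1 : Pfin X).atoms with hA₀
      set b : X → ℝ := fun y => ((p₀.1.1.1 {y} : ℝ≥0) : ℝ) with hb
      set M : ℝ := ‖f‖ with hM
      set nn : ℕ := A₀.card with hnn
      have hMpos : 0 ≤ M := norm_nonneg f
      have hfM : ∀ z : X, |f z| ≤ M := fun z => by
        simpa [Real.norm_eq_abs] using f.norm_coe_le_norm z
      set D : ℝ := nn * (1 + (nn + 1) * (M + 1)) + 1 with hD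
      have hDpos : 0 < D := by positivity
      set ε' : ℝ := ε / D with hε'def
      have hε' : 0 < ε' := div_pos hε hDpos
      -- basic facts about the base point
      have hbsum : ∑ y ∈ A₀, b y = 1 := by
        have h1 := Pfin.sum_atoms_eq_one (p₀.1.1 : Pfin X)
        have h2 : ((∑ y ∈ A₀, (p₀.1.1.1 {y} : ℝ≥0) : ℝ≥0) : ℝ) = 1 := by rw [h1]; simp
        rw [NNReal.coe_sum] at h2
        exact h2
      have hbpos : ∀ y ∈ A₀, 0 < b y := by
        intro y hy
        have h := Pfin.mem_atoms.mp hy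
        have : p₀.1.1.1 {y} ≠ 0 := by
          intro h0
          apply h
          rw [← Pfin.coe_singleton, h0, ENNReal.coe_zero]
        simpa [hb, pos_iff_ne_zero] using this
      have hA₀ne : A₀.Nonempty := by
        by_contra hcon
        rw [Finset.not_nonempty_iff_eq_empty] at hcon
        rw [hcon, Finset.sum_empty] at hbsum
        norm_num at hbsum
      have hn1 : 1 ≤ (nn : ℝ) := by
        have := Finset.card_pos.mpr hA₀ne
        exact_mod_cast this
      -- continuity of H near each atom of the base point
      have hce : ∀ y ∈ A₀, ∃ δ > (0:ℝ), ∃ v ∈ 𝓝 p₀.1, ∃ T ∈ 𝓝 p₀.2,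
          ∀ (z : X) (μ : ↥U) (t : I) (h : (z, μ) ∈ Q), dist z y < δ → μ ∈ v → t ∈ T →
            |f (H (⟨(z, μ), h⟩, t)) - f (Fmap Q H p₀ y)| < ε' := by
        intro y hy
        have h₀ : (y, p₀.1) ∈ Q := hatomQ p₀.1 y hy
        have hFm : Fmap Q H p₀ y = H (⟨(y, p₀.1), h₀⟩, p₀.2) := dif_pos h₀
        have hc : ContinuousAt (fun q : ↥Q × I => f (H q)) (⟨(y, p₀.1), h₀⟩, p₀.2) :=
          (f.continuous.comp H.continuous).continuousAt
        have hev : ∀ᶠ q : ↥Q × I in 𝓝 (⟨(y, p₀.1), h₀⟩, p₀.2),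
            |f (H q) - f (H (⟨(y, p₀.1), h₀⟩, p₀.2))| < ε' := by
          have := Metric.tendsto_nhds.mp hc ε' hε'
          simpa [Real.dist_eq] using this
        rw [nhds_prod_eq] at hev
        obtain ⟨S₁, hS₁, T₁, hT₁, hsub⟩ := Filter.mem_prod_iff.mp hev
        rw [nhds_subtype_eq_comap] at hS₁
        obtain ⟨W, hW, hWsub⟩ := Filter.mem_comap.mp hS₁
        rw [nhds_prod_eq] at hW
        obtain ⟨s, hs, v, hv, hsv⟩ := Filter.mem_prod_iff.mp hW
        obtain ⟨δ, hδ, hball⟩ := Metric.mem_nhds_iff.mp hs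
        refine ⟨δ, hδ, v, hv, T₁, hT₁, ?_⟩
        intro z μ t h hdist hμv htT
        have h1 : ((z, μ) : X × ↥U) ∈ W := hsv ⟨hball (Metric.mem_ball.mpr hdist), hμv⟩
        have h2 : (⟨(z, μ), h⟩ : ↥Q) ∈ S₁ := hWsub h1
        have h3 := hsub (Set.mk_mem_prod h2 htT)
        rw [hFm]
        exact h3
      choose! δf hδf vf hvf Tf hTf hcls using hce
      -- a separation radius for the atoms of the base point
      obtain ⟨sep, hsep0, hseple⟩ : ∃ s > (0:ℝ), ∀ y ∈ A₀, ∀ z ∈ A₀, y ≠ z → s ≤ dist y z := by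
        set P := (A₀ ×ˢ A₀).filter (fun q => q.1 ≠ q.2) with hP
        rcases P.eq_empty_or_nonempty with hPe | hPne
        · refine ⟨1, one_pos, fun y hy z hz hne => ?_⟩
          exfalso
          have : (y, z) ∈ P := Finset.mem_filter.mpr ⟨Finset.mem_product.mpr ⟨hy, hz⟩, hne⟩
          rw [hPe] at this
          exact Finset.notMem_empty _ this
        · obtain ⟨q, hq, hmin⟩ := P.exists_min_image (fun q => dist q.1 q.2) hPne
          have hq' := Finset.mem_filter.mp hq
          refine ⟨dist q.1 q.2, dist_pos.mpr hq'.2, fun y hy z hz hne => ?_⟩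
          exact hmin (y, z) (Finset.mem_filter.mpr ⟨Finset.mem_product.mpr ⟨hy, hz⟩, hne⟩)
      set δstar : ℝ := min (A₀.inf' hA₀ne δf) (sep / 2) with hδstardef
      have hδstarpos : 0 < δstar :=
        lt_min ((Finset.lt_inf'_iff _).mpr fun y hy => hδf y hy) (by linarith)
      have hδstar_le : ∀ y ∈ A₀, δstar ≤ δf y := fun y hy =>
        le_trans (min_le_left _ _) (Finset.inf'_le _ hy)
      have hball_disj : ∀ y ∈ A₀, ∀ z ∈ A₀, y ≠ z → Disjoint (ball y δstar) (ball z δstar) := by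
        intro y hy z hz hne
        rw [Set.disjoint_left]
        intro w hwy hwz
        have h2 : dist w y < δstar := mem_ball.mp hwy
        have h3 : dist w z < δstar := mem_ball.mp hwz
        have h4 : δstar ≤ sep / 2 := min_le_right _ _
        have h5 := hseple y hy z hz hne
        have h1 : dist y z ≤ dist y w + dist w z := dist_triangle _ _ _
        have hcomm : dist y w = dist w y := dist_comm y w
        linarith
      -- portmanteau: eventual lower bound on the mass of the small balls
      have hport : ∀ y ∈ A₀, ∀ᶠ p : ↥U × I in 𝓝 p₀,
          b y - ε' < ((p.1.1.1 : Measure X) (ball y δstar)).toReal := by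
        intro y hy
        have hlim : ((p₀.1.1.1 : Measure X) (ball y δstar)) ≤
            Filter.liminf (fun ν : ProbabilityMeasure X => (ν : Measure X) (ball y δstar))
              (𝓝 (p₀.1.1.1 : ProbabilityMeasure X)) :=
          ProbabilityMeasure.le_liminf_measure_open_of_tendsto tendsto_id isOpen_ball
        have hmem0 : ((p₀.1.1.1 {y} : ℝ≥0) : ℝ≥0∞) ≤ (p₀.1.1.1 : Measure X) (ball y δstar) := by
          rw [Pfin.coe_singleton]
          exact measure_mono (Set.singleton_subset_iff.mpr (mem_ball_self hδstarpos))
        have hcont2 : Continuous (fun p : ↥U × I => (p.1.1.1 : ProbabilityMeasure X)) :=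
          (continuous_subtype_val.comp continuous_subtype_val).comp continuous_fst
        rcases lt_or_ge (0:ℝ) (b y - ε') with hbe | hbe
        · have hofR : ENNReal.ofReal (b y - ε') < (p₀.1.1.1 : Measure X) (ball y δstar) := by
            refine lt_of_lt_of_le ?_ hmem0
            have h1 : ENNReal.ofReal (b y - ε') < ENNReal.ofReal (b y) := by
              rw [ENNReal.ofReal_lt_ofReal_iff (hbpos y hy)]
              linarith
            have hid : ENNReal.ofReal (b y) = ((p₀.1.1.1 {y} : ℝ≥0) : ℝ≥0∞) := by
              rw [hb]
              simp [ENNReal.ofReal_coe_nnreal]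
            rwa [hid] at h1
          have hev : ∀ᶠ ν : ProbabilityMeasure X in 𝓝 (p₀.1.1.1 : ProbabilityMeasure X),
              ENNReal.ofReal (b y - ε') < (ν : Measure X) (ball y δstar) :=
            Filter.eventually_lt_of_lt_liminf (lt_of_lt_of_le hofR hlim)
          refine ((hcont2.tendsto p₀).eventually hev).mono fun p hp => ?_
          have hne : (p.1.1.1 : Measure X) (ball y δstar) ≠ ⊤ := measure_ne_top _ _
          have h2 := (ENNReal.toReal_lt_toReal ENNReal.ofReal_ne_top hne).mpr hp
          rwa [ENNReal.toReal_ofReal hbe.le] at h2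
        · have hbne : (0 : ℝ≥0∞) < ((p₀.1.1.1 {y} : ℝ≥0) : ℝ≥0∞) := by
            have h1 := hbpos y hy
            rw [hb] at h1
            exact_mod_cast h1
          have hhalf : ((p₀.1.1.1 {y} : ℝ≥0) : ℝ≥0∞) / 2 < ((p₀.1.1.1 {y} : ℝ≥0) : ℝ≥0∞) :=
            ENNReal.half_lt_self hbne.ne' ENNReal.coe_ne_top
          have hev : ∀ᶠ ν : ProbabilityMeasure X in 𝓝 (p₀.1.1.1 : ProbabilityMeasure X),
              ((p₀.1.1.1 {y} : ℝ≥0) : ℝ≥0∞) / 2 < (ν : Measure X) (ball y δstar) :=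
            Filter.eventually_lt_of_lt_liminf (lt_of_lt_of_le (lt_of_lt_of_le hhalf hmem0) hlim)
          refine ((hcont2.tendsto p₀).eventually hev).mono fun p hp => ?_
          have hne : (p.1.1.1 : Measure X) (ball y δstar) ≠ ⊤ := measure_ne_top _ _
          have h0lt : 0 < ((p.1.1.1 : Measure X) (ball y δstar)).toReal :=
            ENNReal.toReal_pos (lt_of_le_of_lt (zero_le) hp).ne' hne
          linarith
      have hev1 : ∀ᶠ p : ↥U × I in 𝓝 p₀, ∀ y ∈ A₀,
          b y - ε' < ((p.1.1.1 : Measure X) (ball y δstar)).toReal :=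
        (Filter.eventually_all_finset A₀).mpr hport
      have hev2 : ∀ᶠ p : ↥U × I in 𝓝 p₀, ∀ y ∈ A₀, p.1 ∈ vf y := by
        rw [Filter.eventually_all_finset]
        intro y hy
        exact (continuous_fst.tendsto p₀).eventually (Filter.eventually_mem_set.mpr (hvf y hy))
      have hev3 : ∀ᶠ p : ↥U × I in 𝓝 p₀, ∀ y ∈ A₀, p.2 ∈ Tf y := by
        rw [Filter.eventually_all_finset]
        intro y hy
        exact (continuous_snd.tendsto p₀).eventually (Filter.eventually_mem_set.mpr (hTf y hy))
      filter_upwards [hev1, hev2, hev3] with p hp1 hp2 hp3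
      rw [Real.dist_eq]
      -- notation for the nearby point
      set A : Finset X := (p.1.1 : Pfin X).atoms with hA
      set c : X → ℝ := fun z => ((p.1.1.1 {z} : ℝ≥0) : ℝ) with hc
      set Ay : X → Finset X := fun y => A.filter (· ∈ ball y δstar) with hAy
      set m : X → ℝ := fun y => ∑ z ∈ Ay y, c z with hm
      set Agood : Finset X := A₀.biUnion Ay with hAgood
      have hc0 : ∀ z, 0 ≤ c z := fun z => NNReal.coe_nonneg _
      have hcsum : ∑ z ∈ A, c z = 1 := by
        have h1 := Pfin.sum_atoms_eq_one (p.1.1 : Pfin X)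
        have h2 : ((∑ z ∈ A, (p.1.1.1 {z} : ℝ≥0) : ℝ≥0) : ℝ) = 1 := by rw [h1]; simp
        rw [NNReal.coe_sum] at h2
        exact h2
      have hGoodsub : Agood ⊆ A := Finset.biUnion_subset.mpr fun y _ => Finset.filter_subset _ _
      have hdisj : (↑A₀ : Set X).PairwiseDisjoint Ay := by
        intro y hy z hz hne
        show Disjoint (Ay y) (Ay z)
        rw [Finset.disjoint_left]
        intro w hwy hwz
        have h1 := (Finset.mem_filter.mp hwy).2
        have h2 := (Finset.mem_filter.mp hwz).2
        exact Set.disjoint_left.mp (hball_disj y hy z hz hne) h1 h2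
      have hm_eq : ∀ y ∈ A₀, ((p.1.1.1 : Measure X) (ball y δstar)).toReal = m y := by
        intro y _
        have h0 : ((p.1.1 : Pfin X).1 : Measure X) (ball y δstar)
            = ∑ z ∈ Ay y, ((p.1.1.1 {z} : ℝ≥0) : ℝ≥0∞) := by
          rw [Pfin.apply_eq_sum_atoms (p.1.1 : Pfin X) measurableSet_ball]
          exact Finset.sum_congr rfl fun z _ => (Pfin.coe_singleton _ z).symm
        rw [h0, ← ENNReal.coe_finset_sum, ENNReal.coe_toReal, NNReal.coe_sum]
      have hmlow : ∀ y ∈ A₀, b y - ε' < m y := by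
        intro y hy
        have := hp1 y hy
        rwa [hm_eq y hy] at this
      have hm0 : ∀ y ∈ A₀, 0 ≤ m y := fun y _ => Finset.sum_nonneg fun z _ => hc0 z
      have hmsum : ∑ y ∈ A₀, m y ≤ 1 := by
        rw [hm, ← Finset.sum_biUnion hdisj]
        rw [← hcsum]
        exact Finset.sum_le_sum_of_subset_of_nonneg hGoodsub fun z _ _ => hc0 z
      have hmy_le_one : ∀ y ∈ A₀, m y ≤ 1 :=
        fun y hy => le_trans (Finset.single_le_sum hm0 hy) hmsum
      have hmupper : ∀ y ∈ A₀, m y ≤ b y + nn * ε' := by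
        intro y hy
        have h1 : m y + ∑ y' ∈ A₀.erase y, m y' = ∑ y' ∈ A₀, m y' :=
          Finset.add_sum_erase A₀ m hy
        have h2 : ∑ y' ∈ A₀.erase y, (b y' - ε') ≤ ∑ y' ∈ A₀.erase y, m y' :=
          Finset.sum_le_sum fun z hz => (hmlow z (Finset.mem_of_mem_erase hz)).le
        have h3 : ∑ y' ∈ A₀.erase y, (b y' - ε')
            = (∑ y' ∈ A₀.erase y, b y') - (A₀.erase y).card * ε' := by
          rw [Finset.sum_sub_distrib, Finset.sum_const, nsmul_eq_mul]
        have h4 : b y + ∑ y' ∈ A₀.erase y, b y' = 1 := by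
          rw [Finset.add_sum_erase A₀ b hy]; exact hbsum
        have h5 : ((A₀.erase y).card : ℝ) ≤ nn := by
          exact_mod_cast Finset.card_le_card (Finset.erase_subset y A₀)
        nlinarith [hε'.le]
      have hbad : ∑ z ∈ A \ Agood, c z ≤ nn * ε' := by
        have h1 : (∑ z ∈ A \ Agood, c z) + ∑ z ∈ Agood, c z = ∑ z ∈ A, c z :=
          Finset.sum_sdiff hGoodsub
        have h2 : ∑ z ∈ Agood, c z = ∑ y ∈ A₀, m y := Finset.sum_biUnion hdisj
        have h3 : ∑ y ∈ A₀, (b y - ε') ≤ ∑ y ∈ A₀, m y :=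
          Finset.sum_le_sum fun z hz => (hmlow z hz).le
        have h4 : ∑ y ∈ A₀, (b y - ε') = 1 - nn * ε' := by
          rw [Finset.sum_sub_distrib, hbsum, Finset.sum_const, nsmul_eq_mul, hnn]
        rw [hcsum] at h1
        linarith
      -- the per-atom estimate
      have hterm : ∀ y ∈ A₀, |(∑ z ∈ Ay y, c z * f (Fmap Q H p z)) - b y * f (Fmap Q H p₀ y)|
          ≤ ε' + (nn * ε') * M := by
        intro y hy
        set g₀ : ℝ := f (Fmap Q H p₀ y) with hg₀
        have hzq : ∀ z ∈ Ay y, |f (Fmap Q H p z) - g₀| ≤ ε' := by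
          intro z hz
          have hzA : z ∈ A := Finset.filter_subset _ _ hz
          have hzball : z ∈ ball y δstar := (Finset.mem_filter.mp hz).2
          have hq : (z, p.1) ∈ Q := hatomQ p.1 z hzA
          have hFz : Fmap Q H p z = H (⟨(z, p.1), hq⟩, p.2) := dif_pos hq
          have hdist : dist z y < δf y := lt_of_lt_of_le (mem_ball.mp hzball) (hδstar_le y hy)
          have h6 := hcls y hy z p.1 p.2 hq hdist (hp2 y hy) (hp3 y hy)
          rw [hFz]
          exact h6.le
        have h1 : |∑ z ∈ Ay y, c z * (f (Fmap Q H p z) - g₀)| ≤ ε' := by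
          calc |∑ z ∈ Ay y, c z * (f (Fmap Q H p z) - g₀)|
              ≤ ∑ z ∈ Ay y, |c z * (f (Fmap Q H p z) - g₀)| := Finset.abs_sum_le_sum_abs _ _
            _ = ∑ z ∈ Ay y, c z * |f (Fmap Q H p z) - g₀| := by
                refine Finset.sum_congr rfl fun z _ => ?_
                rw [abs_mul, abs_of_nonneg (hc0 z)]
            _ ≤ ∑ z ∈ Ay y, c z * ε' :=
                Finset.sum_le_sum fun z hz => mul_le_mul_of_nonneg_left (hzq z hz) (hc0 z)
            _ = m y * ε' := by rw [← Finset.sum_mul]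
            _ ≤ 1 * ε' := mul_le_mul_of_nonneg_right (hmy_le_one y hy) hε'.le
            _ = ε' := one_mul _
        have h2 : |m y - b y| ≤ nn * ε' := by
          rw [abs_sub_le_iff]
          constructor
          · linarith [hmupper y hy]
          · have h7 := hmlow y hy
            nlinarith [hn1, hε'.le]
        have h3 : |g₀| ≤ M := hfM _
        have hsplit : (∑ z ∈ Ay y, c z * f (Fmap Q H p z)) - b y * g₀
            = (∑ z ∈ Ay y, c z * (f (Fmap Q H p z) - g₀)) + (m y - b y) * g₀ := by
          simp only [mul_sub, Finset.sum_sub_distrib, ← Finset.sum_mul]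
          rw [hm]
          ring
        rw [hsplit]
        calc |(∑ z ∈ Ay y, c z * (f (Fmap Q H p z) - g₀)) + (m y - b y) * g₀|
            ≤ |∑ z ∈ Ay y, c z * (f (Fmap Q H p z) - g₀)| + |(m y - b y) * g₀| := abs_add_le _ _
          _ ≤ ε' + (nn * ε') * M := by
              refine add_le_add h1 ?_
              rw [abs_mul]
              exact mul_le_mul h2 h3 (abs_nonneg _) (mul_nonneg (Nat.cast_nonneg nn) hε'.le)
      -- assemble
      have hsplitA : ∑ z ∈ A, c z * f (Fmap Q H p z)
          = (∑ z ∈ A \ Agood, c z * f (Fmap Q H p z))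
            + ∑ y ∈ A₀, ∑ z ∈ Ay y, c z * f (Fmap Q H p z) := by
        rw [← Finset.sum_biUnion hdisj, Finset.sum_sdiff hGoodsub]
      have hEq : (∑ z ∈ A, c z * f (Fmap Q H p z)) - ∑ y ∈ A₀, b y * f (Fmap Q H p₀ y)
          = (∑ z ∈ A \ Agood, c z * f (Fmap Q H p z))
            + ∑ y ∈ A₀, ((∑ z ∈ Ay y, c z * f (Fmap Q H p z)) - b y * f (Fmap Q H p₀ y)) := by
        rw [hsplitA, Finset.sum_sub_distrib]
        ring
      have h4 : |∑ z ∈ A \ Agood, c z * f (Fmap Q H p z)| ≤ (nn * ε') * M := by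
        calc |∑ z ∈ A \ Agood, c z * f (Fmap Q H p z)|
            ≤ ∑ z ∈ A \ Agood, |c z * f (Fmap Q H p z)| := Finset.abs_sum_le_sum_abs _ _
          _ = ∑ z ∈ A \ Agood, c z * |f (Fmap Q H p z)| := by
              refine Finset.sum_congr rfl fun z _ => ?_
              rw [abs_mul, abs_of_nonneg (hc0 z)]
          _ ≤ ∑ z ∈ A \ Agood, c z * M :=
              Finset.sum_le_sum fun z _ => mul_le_mul_of_nonneg_left (hfM _) (hc0 z)
          _ = (∑ z ∈ A \ Agood, c z) * M := by rw [← Finset.sum_mul]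
          _ ≤ (nn * ε') * M := mul_le_mul_of_nonneg_right hbad hMpos
      have h5 : |∑ y ∈ A₀, ((∑ z ∈ Ay y, c z * f (Fmap Q H p z)) - b y * f (Fmap Q H p₀ y))|
          ≤ nn * (ε' + (nn * ε') * M) := by
        calc |∑ y ∈ A₀, ((∑ z ∈ Ay y, c z * f (Fmap Q H p z)) - b y * f (Fmap Q H p₀ y))|
            ≤ ∑ y ∈ A₀, |(∑ z ∈ Ay y, c z * f (Fmap Q H p z)) - b y * f (Fmap Q H p₀ y)| :=
              Finset.abs_sum_le_sum_abs _ _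
          _ ≤ ∑ _y ∈ A₀, (ε' + (nn * ε') * M) := Finset.sum_le_sum hterm
          _ = nn * (ε' + (nn * ε') * M) := by
              rw [Finset.sum_const, nsmul_eq_mul, hnn]
      have habs : |(∑ z ∈ A, c z * f (Fmap Q H p z)) - ∑ y ∈ A₀, b y * f (Fmap Q H p₀ y)|
          ≤ (nn * ε') * M + nn * (ε' + (nn * ε') * M) := by
        rw [hEq]
        exact le_trans (abs_add_le _ _) (add_le_add h4 h5)
      have hεD : ε' * D = ε := by
        rw [hε'def]
        exact div_mul_cancel₀ ε hDpos.ne'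
      have hkey : (nn * ε') * M + nn * (ε' + (nn * ε') * M) < ε := by
        have hnn0 : (0:ℝ) ≤ (nn:ℝ) := Nat.cast_nonneg nn
        have hcoef : (nn:ℝ) * M + nn + nn * nn * M ≤ D - 1 := by
          rw [hD]
          nlinarith [mul_nonneg hnn0 hnn0, hMpos, hnn0]
        have h8 : (nn * ε') * M + nn * (ε' + (nn * ε') * M)
            = ε' * ((nn:ℝ) * M + nn + nn * nn * M) := by ring
        have h9 : ε' * ((nn:ℝ) * M + nn * 1 + nn * nn * M) ≤ ε' * (D - 1) := by
          refine mul_le_mul_of_nonneg_left ?_ hε'.le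
          simpa using hcoef
        rw [h8]
        have h10 : ε' * (D - 1) = ε - ε' := by rw [mul_sub, hεD]; ring
        simp only [mul_one] at h9
        linarith
      exact lt_of_le_of_lt habs hkey

    exact hmain
  exact (hPM.subtype_mk fun p => (G p).1.2).subtype_mk fun p => (G p).2

end ContAux

/-- Let `X` be a compact metric space, `U ⊆ P^fin(X)`, and
`Q(X,U) = {(x,μ) : x ∈ supp μ}`. If `H : Q(X,U) × [0,1] → X` is a continuous support
homotopy in `U` (i.e. `Σ aᵢ δ_{H(xᵢ,μ,t)} ∈ U` whenever `μ = Σ aᵢ δ_{xᵢ} ∈ U` with all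
`aᵢ > 0`), then the induced map `H̃ : U × [0,1] → U`,
`H̃(μ,t) = Σ aᵢ δ_{H(xᵢ,μ,t)}` for `μ = Σ aᵢ δ_{xᵢ}` with all `aᵢ > 0`, is a
well-defined continuous map. -/
theorem support_homotopy_induces_continuous_map
    {X : Type*} [MetricSpace X] [CompactSpace X] [MeasurableSpace X] [BorelSpace X]
    (U : Set (Pfin X)) (Q : Set (X × ↥U))
    (hQ : Q = {p : X × ↥U | p.1 ∈ suppSet ((p.2 : Pfin X)).1})
    (H : C(↥Q × I, X))
    (hH : ∀ (t : I) (μ : ↥U) (n : ℕ) (a : Fin n → ℝ≥0) (x : Fin n → X)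
      (hx : ∀ i, ((x i, μ) : X × ↥U) ∈ Q),
      (∀ i, 0 < a i) →
      (((μ : Pfin X)).1 : Measure X) = ∑ i, (a i) • Measure.dirac (x i) →
      ∃ ν : ↥U, (((ν : Pfin X)).1 : Measure X) =
        ∑ i, (a i) • Measure.dirac (H (⟨(x i, μ), hx i⟩, t))) :
    ∃ Htilde : C(↥U × I, ↥U),
      ∀ (μ : ↥U) (t : I) (n : ℕ) (a : Fin n → ℝ≥0) (x : Fin n → X)
        (hx : ∀ i, ((x i, μ) : X × ↥U) ∈ Q),
        (∀ i, 0 < a i) →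
        (((μ : Pfin X)).1 : Measure X) = ∑ i, (a i) • Measure.dirac (x i) →
        (((Htilde (μ, t) : Pfin X)).1 : Measure X) =
          ∑ i, (a i) • Measure.dirac (H (⟨(x i, μ), hx i⟩, t)) := by
  classical
  -- membership in Q
  have hmem : ∀ (z : X) (μ : ↥U), ((z, μ) ∈ Q) ↔ (μ.1.1 : Measure X) {z} ≠ 0 := by
    intro z μ
    rw [hQ]
    simp only [Set.mem_setOf_eq, suppSet]
    constructor
    · intro h h0
      apply h
      have := Pfin.coe_singleton μ.1 z
      rw [h0] at this
      exact_mod_cast this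
    · intro h h0
      apply h
      rw [← Pfin.coe_singleton, h0, ENNReal.coe_zero]
  -- membership of atoms in Q
  have hatomQ : ∀ (μ : ↥U) (z : X), z ∈ μ.1.atoms → (z, μ) ∈ Q := by
    intro μ z hz
    exact (hmem z μ).mpr (Pfin.mem_atoms.mp hz)
  -- the key pointwise existence
  have key : ∀ p : ↥U × I, ∃ ν : ↥U, ((ν.1.1 : Measure X)) =
      ∑ y ∈ (p.1.1 : Pfin X).atoms, (p.1.1.1 {y} : ℝ≥0) • Measure.dirac (Fmap Q H p y) := by
    rintro ⟨μ, t⟩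
    set A := μ.1.atoms with hA
    set e := A.equivFin with he
    set xf : Fin A.card → X := fun i => (e.symm i : X) with hxf
    set af : Fin A.card → ℝ≥0 := fun i => μ.1.1 {xf i} with haf
    have hx : ∀ i, ((xf i, μ) : X × ↥U) ∈ Q := fun i => hatomQ μ _ (e.symm i).2
    have hpos : ∀ i, 0 < af i := by
      intro i
      have := (e.symm i).2
      rw [Pfin.mem_atoms] at this
      rw [pos_iff_ne_zero]
      intro h0
      apply this
      rw [← Pfin.coe_singleton]
      simp only [haf] at h0
      rw [h0, ENNReal.coe_zero]
    have hdec : (μ.1.1 : Measure X) = ∑ i, (af i) • Measure.dirac (xf i) := by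
      rw [Pfin.toMeasure_eq_sum μ.1]
      rw [← Finset.sum_attach A (fun y => (μ.1.1 {y} : ℝ≥0) • Measure.dirac y)]
      exact (Equiv.sum_comp e.symm fun z => (μ.1.1 {(z : X)} : ℝ≥0) • Measure.dirac (z : X)).symm
    obtain ⟨ν, hν⟩ := hH t μ A.card af xf hx hpos hdec
    refine ⟨ν, hν.trans ?_⟩
    have hFm : ∀ i, H (⟨(xf i, μ), hx i⟩, t) = Fmap Q H (μ, t) (xf i) := by
      intro i
      simp only [Fmap]
      rw [dif_pos (hx i)]
    calc ∑ i, (af i) • Measure.dirac (H (⟨(xf i, μ), hx i⟩, t))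
        = ∑ i, (af i) • Measure.dirac (Fmap Q H (μ, t) (xf i)) := by
          refine Finset.sum_congr rfl fun i _ => by rw [hFm i]
      _ = ∑ y ∈ A, (μ.1.1 {y} : ℝ≥0) • Measure.dirac (Fmap Q H (μ, t) y) :=
          Pfin.sum_dirac_comp _ hdec hpos
  choose G hG using key
  have hGcont : Continuous G := continuity_aux U Q H hmem G hG
  refine ⟨⟨G, hGcont⟩, ?_⟩
  intro μ t n a x hx hpos hdec
  have hFm : ∀ i, H (⟨(x i, μ), hx i⟩, t) = Fmap Q H (μ, t) (x i) := by
    intro i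
    simp only [Fmap]
    rw [dif_pos (hx i)]
  calc ((G (μ, t)).1.1 : Measure X)
      = ∑ y ∈ μ.1.atoms, (μ.1.1 {y} : ℝ≥0) • Measure.dirac (Fmap Q H (μ, t) y) := hG (μ, t)
    _ = ∑ i, (a i) • Measure.dirac (Fmap Q H (μ, t) (x i)) := (Pfin.sum_dirac_comp _ hdec hpos).symm
    _ = ∑ i, (a i) • Measure.dirac (H (⟨(x i, μ), hx i⟩, t)) := by
        refine Finset.sum_congr rfl fun i _ => by rw [hFm i]
end
end
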